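/- arXiv:1806.08992 — 6 statements merged into one kernel-verified Lean document; each statement's English description precedes it below -/
import Mathlib

section
/- For all x, y ∈ F_q^n with 0 < d_H(x,y) < n (where d_H denotes Hamming distance), the pair distance satisfies d_H(x,y) + 1 ≤ d_P(x,y) ≤ 2·d_H(x,y). Moreover, in the extreme cases d_H(x,y) = 0 or d_H(x,y) = n, one has d_P(x,y) = d_H(x,y). -/
open Finset

/-- The symbol-pair distance between two vectors `x, y : Fin n → F`:
the number of indices `i` such that `(x i, x (i+1 mod n)) ≠ (y i, y (i+1 mod n))`. -/
def pairDist {F : Type*} [DecidableEq F] {n : ℕ} (x y : Fin n → F) : ℕ :=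
  (Finset.univ.filter fun i : Fin n =>
    (x i, x ⟨(i.1 + 1) % n, Nat.mod_lt _ i.pos⟩) ≠
    (y i, y ⟨(i.1 + 1) % n, Nat.mod_lt _ i.pos⟩)).card

private lemma succ_idx_eq {n : ℕ} [NeZero n] (i : Fin n) :
    (⟨(i.1 + 1) % n, Nat.mod_lt _ i.pos⟩ : Fin n) = i + 1 := by
  rcases n with _ | m
  · exact i.elim0
  · apply Fin.ext
    simp [Fin.add_def, Fin.val_one', Nat.add_mod_mod]

open Fin.CommRing in
/-- For all `x, y ∈ F_q^n` with `0 < d_H(x,y) < n`, one has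
`d_H(x,y) + 1 ≤ d_P(x,y) ≤ 2 d_H(x,y)`; in the extreme cases `d_H(x,y) = 0` or
`d_H(x,y) = n`, one has `d_P(x,y) = d_H(x,y)`. -/
theorem pairDist_vs_hammingDist {F : Type*} [Field F] [Fintype F] [DecidableEq F]
    {n : ℕ} (x y : Fin n → F) :
    (0 < hammingDist x y → hammingDist x y < n →
      hammingDist x y + 1 ≤ pairDist x y ∧ pairDist x y ≤ 2 * hammingDist x y) ∧
    (hammingDist x y = 0 ∨ hammingDist x y = n → pairDist x y = hammingDist x y) := by
  rcases Nat.eq_zero_or_pos n with hn | hn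
  · subst hn
    constructor
    · intro h1 h2; omega
    · intro _
      simp [pairDist, hammingDist]
  haveI : NeZero n := ⟨hn.ne'⟩
  set D : Finset (Fin n) := Finset.univ.filter fun i => x i ≠ y i with hD
  set P : Finset (Fin n) := Finset.univ.filter fun i : Fin n =>
    (x i, x ⟨(i.1 + 1) % n, Nat.mod_lt _ i.pos⟩) ≠
    (y i, y ⟨(i.1 + 1) % n, Nat.mod_lt _ i.pos⟩) with hP
  have hdH : hammingDist x y = D.card := rfl
  have hdP : pairDist x y = P.card := rfl
  have memP : ∀ i : Fin n, i ∈ P ↔ i ∈ D ∨ i + 1 ∈ D := by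
    intro i
    rw [hP, hD]
    simp only [mem_filter, mem_univ, true_and, succ_idx_eq i, ne_eq, Prod.mk.injEq, not_and_or]
  have hsub : D ⊆ P := fun i hi => (memP i).mpr (Or.inl hi)
  have himg : P = D ∪ D.image (fun j => j - 1) := by
    ext i
    rw [memP]
    simp only [mem_union, mem_image]
    constructor
    · rintro (h | h)
      · exact Or.inl h
      · exact Or.inr ⟨i + 1, h, by ring⟩
    · rintro (h | ⟨j, hj, rfl⟩)
      · exact Or.inl h
      · right; simpa using hj
  constructor
  · intro h1 h2
    rw [hdH] at h1 h2 ⊢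
    rw [hdP]
    constructor
    · -- strict: D ⊂ P
      have hss : D ⊂ P := by
        refine Finset.ssubset_iff_of_subset hsub |>.mpr ?_
        by_contra hcon
        push_neg at hcon
        have hback : ∀ i : Fin n, i + 1 ∈ D → i ∈ D := by
          intro i hi
          by_contra hni
          exact hni (hcon i ((memP i).mpr (Or.inr hi)))
        -- show D = univ
        obtain ⟨a, ha⟩ := Finset.card_pos.mp h1
        have key : ∀ k : ℕ, a - (k : Fin n) ∈ D := by
          intro k
          induction k with
          | zero => simpa using ha
          | succ k ih =>
            have : a - ((k : Fin n) + 1) + 1 ∈ D := by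
              have : a - ((k : Fin n) + 1) + 1 = a - (k : Fin n) := by ring
              rw [this]; exact ih
            have h2 := hback _ this
            simpa [Nat.cast_add, Nat.cast_one] using h2
        have huniv : D = Finset.univ := by
          ext c
          simp only [mem_univ, iff_true]
          have := key ((a - c).val)
          simpa [Fin.cast_val_eq_self] using this
        rw [huniv, Finset.card_univ, Fintype.card_fin] at h2
        omega
      have := Finset.card_lt_card hss
      omega
    · rw [himg]
      calc (D ∪ D.image (fun j => j - 1)).card ≤ D.card + (D.image (fun j => j - 1)).card :=
            Finset.card_union_le _ _
        _ ≤ D.card + D.card := Nat.add_le_add_left Finset.card_image_le _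
        _ = 2 * D.card := by ring
  · rintro (h | h) <;> rw [hdH] at h ⊢ <;> rw [hdP]
    · have hDe : D = ∅ := Finset.card_eq_zero.mp h
      have : P = ∅ := by
        ext i
        simp only [Finset.notMem_empty, iff_false]
        intro hi
        rcases (memP i).mp hi with h' | h' <;> simp [hDe] at h'
      rw [this, h, Finset.card_empty]
    · have hDu : D = Finset.univ := by
        apply Finset.eq_univ_of_card
        rw [h, Fintype.card_fin]
      have : P = Finset.univ := Finset.eq_univ_of_forall fun i =>
        (memP i).mpr (Or.inl (hDu ▸ Finset.mem_univ i))
      rw [this, Finset.card_univ, Fintype.card_fin, h]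
end

section
/- (Singleton bound for symbol-pair codes) Let q ≥ 2 be a prime power and let C ⊆ F_q^n be a code with minimum pair distance d_P(C) = d where 2 ≤ d ≤ n. Then |C| ≤ q^{n − d + 2}. -/
/-- The minimum pair distance of a code `C`. -/
noncomputable def minPairDist {F : Type*} [DecidableEq F] {n : ℕ}
    (C : Finset (Fin n → F)) : ℕ :=
  sInf {d : ℕ | ∃ x ∈ C, ∃ y ∈ C, x ≠ y ∧ pairDist x y = d}

/-- (Singleton bound for symbol-pair codes) If `C ⊆ F_q^n` is a code with minimum
pair distance `d`, where `2 ≤ d ≤ n`, then `|C| ≤ q^(n - d + 2)`. -/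
theorem singleton_bound_pair {F : Type*} [Field F] [Fintype F] [DecidableEq F]
    {n q d : ℕ} (hq : Fintype.card F = q)
    (C : Finset (Fin n → F)) (hC : 2 ≤ C.card)
    (hd : minPairDist C = d) (hd2 : 2 ≤ d) (hdn : d ≤ n) :
    C.card ≤ q ^ (n - d + 2) := by
  have key : ∀ x ∈ C, ∀ y ∈ C, x ≠ y → d ≤ pairDist x y := by
    intro x hx y hy hxy
    rw [← hd]
    exact Nat.sInf_le ⟨x, hx, y, hy, hxy, rfl⟩
  have hlt : ∀ j : Fin (n - d + 2), j.1 + (d - 2) < n := by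
    intro j; have := j.2; omega
  set f : (Fin n → F) → (Fin (n - d + 2) → F) :=
    fun x j => x ⟨j.1 + (d - 2), hlt j⟩ with hf
  have hinj : Set.InjOn f C := by
    intro x hx y hy hfxy
    by_contra hne
    have hagree : ∀ i : Fin n, d - 2 ≤ i.1 → x i = y i := by
      intro i hi
      have hj : i.1 - (d - 2) < n - d + 2 := by have := i.2; omega
      have h := congrFun hfxy ⟨i.1 - (d - 2), hj⟩
      have hidx : (⟨i.1 - (d - 2) + (d - 2), hlt ⟨i.1 - (d - 2), hj⟩⟩ : Fin n) = i :=
        Fin.ext (by simp; omega)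
      simpa [hf, hidx] using h
    -- the differing pair positions lie in {i : i < d-2} ∪ {n-1}
    have hsub : (Finset.univ.filter fun i : Fin n =>
        (x i, x ⟨(i.1 + 1) % n, Nat.mod_lt _ i.pos⟩) ≠
        (y i, y ⟨(i.1 + 1) % n, Nat.mod_lt _ i.pos⟩)) ⊆
        (Finset.univ.filter fun i : Fin n => i.1 < d - 2) ∪
        (Finset.univ.filter fun i : Fin n => i.1 = n - 1) := by
      intro i hi
      simp only [Finset.mem_filter, Finset.mem_univ, true_and] at hi
      simp only [Finset.mem_union, Finset.mem_filter, Finset.mem_univ, true_and]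
      by_contra hcon
      push_neg at hcon
      obtain ⟨h1, h2⟩ := hcon
      have hin : i.1 < n := i.2
      have h3 : (i.1 + 1) % n = i.1 + 1 := Nat.mod_eq_of_lt (by omega)
      have e1 : x i = y i := hagree i (by omega)
      have e2 : x ⟨(i.1 + 1) % n, Nat.mod_lt _ i.pos⟩ =
          y ⟨(i.1 + 1) % n, Nat.mod_lt _ i.pos⟩ := by
        apply hagree
        show d - 2 ≤ (i.1 + 1) % n
        omega
      exact hi (by rw [e1, e2])
    have hcard1 : (Finset.univ.filter fun i : Fin n => i.1 < d - 2).card ≤ d - 2 := by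
      have := Finset.card_le_card_of_injOn
        (s := Finset.univ.filter fun i : Fin n => i.1 < d - 2)
        (t := Finset.range (d - 2)) (fun i : Fin n => i.1)
        (fun i hi => by
          simp only [Finset.mem_coe, Finset.mem_filter, Finset.mem_univ, true_and] at hi
          exact Finset.mem_range.2 hi)
        (fun a _ b _ h => Fin.ext h)
      simpa using this
    have hcard2 : (Finset.univ.filter fun i : Fin n => i.1 = n - 1).card ≤ 1 := by
      apply Finset.card_le_one.2
      intro a ha b hb
      simp only [Finset.mem_filter, Finset.mem_univ, true_and] at ha hb
      exact Fin.ext (ha.trans hb.symm)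
    have hle : pairDist x y ≤ d - 1 := by
      unfold pairDist
      calc _ ≤ _ := Finset.card_le_card hsub
        _ ≤ _ := Finset.card_union_le _ _
        _ ≤ (d - 2) + 1 := Nat.add_le_add hcard1 hcard2
        _ ≤ d - 1 := by omega
    have := key x hx y hy hne
    omega
  have : C.card ≤ Fintype.card (Fin (n - d + 2) → F) := by
    classical
    have := Finset.card_le_card_of_injOn f (fun _ _ => Finset.mem_univ _) hinj
    simpa using this
  calc C.card ≤ _ := this
    _ = q ^ (n - d + 2) := by simp [Fintype.card_fun, hq]
end

section
/- For any x ∈ F_q^n (n ≥ 2) and any integer d with 0 ≤ d ≤ n−1, the symbol-pair ball satisfies |B_P(x,d)| = 1 + Σ_{i=1}^{d} Σ_{k=⌈i/2⌉}^{i−1} D(n, k, i−k)·(q−1)^k, where D(n,ℓ,w) = (n/w)·C(ℓ−1, w−1)·C(n−ℓ−1, w−1); moreover D(n,ℓ,w) also equals C(ℓ−1, w−1)·[C(n−ℓ−1, w) + 2·C(n−ℓ−1, w−1)] + C(n−ℓ−1, w−1)·C(ℓ−1, w). -/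
/-- The symbol-pair ball of radius `r` centered at `x`. -/
def pairBall {F : Type*} [Fintype F] [DecidableEq F] {n : ℕ}
    (x : Fin n → F) (r : ℕ) : Finset (Fin n → F) :=
  Finset.univ.filter fun y => pairDist x y ≤ r

/-- `D(n, ℓ, w) = (n/w) · C(ℓ−1, w−1) · C(n−ℓ−1, w−1)`. -/
noncomputable def Dpair (n ℓ w : ℕ) : ℝ :=
  (n : ℝ) / w * ((ℓ - 1).choose (w - 1)) * ((n - ℓ - 1).choose (w - 1))

namespace SPB

/-- number of starts of runs of `true`, given previous character `p`. -/
def runsA : Bool → List Bool → ℕ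
  | _, [] => 0
  | p, c :: t => (if c = true ∧ p = false then 1 else 0) + runsA c t

/-- all boolean words of length `m`. -/
def WL : ℕ → Finset (List Bool)
  | 0 => {[]}
  | m + 1 => (WL m).image (List.cons true) ∪ (WL m).image (List.cons false)

lemma mem_WL {m : ℕ} {l : List Bool} : l ∈ WL m ↔ l.length = m := by
  induction m generalizing l with
  | zero => simp [WL, List.length_eq_zero_iff]
  | succ m ih =>
    cases l with
    | nil => simp [WL]
    | cons c t =>
      cases c <;> simp [WL, ih]

/-- count of length-`m` words with `k` trues, `b` run-starts (prev char `p`), ending in `false`. -/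
def Nc (m k b : ℕ) (p : Bool) : ℕ :=
  ((WL m).filter (fun l => l.count true = k ∧ runsA p l = b ∧ l.getLast? = some false)).card

lemma getLast?_cons_of_ne_nil {c : Bool} {t : List Bool} (h : t ≠ []) :
    (c :: t).getLast? = t.getLast? := by
  obtain ⟨b, L, rfl⟩ := List.exists_cons_of_ne_nil h
  exact List.getLast?_cons_cons

lemma Nc_split (m k b : ℕ) (p : Bool) :
    Nc (m + 2) k b p
      = ((WL (m + 1)).filter fun t => t.count true + 1 = k ∧
          runsA true t + (if p = false then 1 else 0) = b ∧ t.getLast? = some false).card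
        + Nc (m + 1) k b false := by
  have hne : ∀ t ∈ WL (m + 1), t ≠ [] := by
    intro t ht hnil
    rw [mem_WL] at ht
    simp [hnil] at ht
  unfold Nc
  rw [show WL (m+2) = (WL (m+1)).image (List.cons true) ∪ (WL (m+1)).image (List.cons false) from rfl]
  rw [Finset.filter_union, Finset.card_union_of_disjoint, Finset.filter_image,
    Finset.filter_image, Finset.card_image_of_injective _ (List.cons_injective),
    Finset.card_image_of_injective _ (List.cons_injective)]
  · congr 1
    · apply congrArg
      apply Finset.filter_congr
      intro t ht
      rw [getLast?_cons_of_ne_nil (hne t ht)]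
      simp only [runsA, List.count_cons, beq_self_eq_true, if_true,
        true_and, add_comm (if p = false then 1 else 0)]
    · apply congrArg
      apply Finset.filter_congr
      intro t ht
      rw [getLast?_cons_of_ne_nil (hne t ht)]
      simp [runsA, List.count_cons]
  · apply Finset.disjoint_filter_filter
    rw [Finset.disjoint_left]
    rintro l hl hl'
    simp only [Finset.mem_image] at hl hl'
    obtain ⟨t, _, rfl⟩ := hl
    obtain ⟨t', _, h⟩ := hl'
    exact absurd (List.head_eq_of_cons_eq h) (by simp)


lemma Nc_zero (k b : ℕ) (p : Bool) : Nc 0 k b p = 0 := by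
  unfold Nc
  rw [show WL 0 = {([] : List Bool)} from rfl]
  rw [Finset.filter_singleton]
  simp

lemma Nc_one (k b : ℕ) (p : Bool) : Nc 1 k b p = if k = 0 ∧ b = 0 then 1 else 0 := by
  unfold Nc
  rw [show WL 1 = {[true], [false]} from rfl]
  rw [Finset.filter_insert, Finset.filter_singleton]
  simp only [runsA, List.count_cons, List.count_nil, List.getLast?_singleton]
  have h1 : ¬ (some true = some false) := by simp
  split_ifs with hA hB hB <;> simp_all <;> omega

lemma R1 (m k b : ℕ) :
    Nc (m + 2) (k + 1) (b + 1) false = Nc (m + 1) k b true + Nc (m + 1) (k + 1) (b + 1) false := by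
  rw [Nc_split]
  congr 1
  unfold Nc
  apply congrArg
  apply Finset.filter_congr
  intro t _
  simp only [eq_self_iff_true, if_true]
  constructor
  · rintro ⟨h1, h2, h3⟩; exact ⟨by omega, by omega, h3⟩
  · rintro ⟨h1, h2, h3⟩; exact ⟨by omega, by omega, h3⟩

lemma R2 (m k b : ℕ) :
    Nc (m + 2) (k + 1) b true = Nc (m + 1) k b true + Nc (m + 1) (k + 1) b false := by
  rw [Nc_split]
  congr 1
  unfold Nc
  apply congrArg
  apply Finset.filter_congr
  intro t _
  simp only [if_neg (by simp : ¬ (true = false)), add_zero]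
  constructor
  · rintro ⟨h1, h2, h3⟩; exact ⟨by omega, h2, h3⟩
  · rintro ⟨h1, h2, h3⟩; exact ⟨by omega, h2, h3⟩

lemma R0 (m b : ℕ) (p : Bool) :
    Nc (m + 2) 0 b p = Nc (m + 1) 0 b false := by
  rw [Nc_split]
  convert zero_add _
  rw [Finset.card_eq_zero, Finset.filter_eq_empty_iff]
  rintro t _ ⟨h1, -, -⟩
  omega

lemma Nc_eq_zero_of_le (m k b : ℕ) (p : Bool) (h : m ≤ k) : Nc m k b p = 0 := by
  rw [Nc, Finset.card_eq_zero, Finset.filter_eq_empty_iff]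
  rintro l hl ⟨h1, h2, h3⟩
  rw [mem_WL] at hl
  have hc : l.count true ≤ l.length := List.count_le_length
  have hkl : l.count true = l.length := by omega
  rw [List.count_eq_length] at hkl
  have hmem : false ∈ l := by
    rw [List.getLast?_eq_getElem?] at h3
    exact List.mem_of_getElem? h3
  exact absurd (hkl false hmem).symm (by simp)

lemma runsA_false_zero (l : List Bool) (h : runsA false l = 0) : l.count true = 0 := by
  induction l with
  | nil => rfl
  | cons c t ih =>
    cases c with
    | true => simp [runsA] at h
    | false =>
      rw [runsA] at h
      simp at h
      rw [List.count_cons]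
      simp [ih h]

lemma V2 (m k : ℕ) : Nc m (k + 1) 0 false = 0 := by
  rw [Nc, Finset.card_eq_zero, Finset.filter_eq_empty_iff]
  rintro l _ ⟨h1, h2, -⟩
  have := runsA_false_zero l h2
  omega

lemma V3 (m b : ℕ) (p : Bool) : Nc (m + 1) 0 b p = if b = 0 then 1 else 0 := by
  induction m generalizing p with
  | zero => rw [Nc_one]; split_ifs <;> simp_all
  | succ m ih => rw [R0, ih]

lemma CW (m : ℕ) :
    (∀ k b, k < m → Nc m k b true = k.choose b * (m - k - 1).choose b)
      ∧ (∀ k b, Nc m (k + 1) (b + 1) false = k.choose b * (m - k - 1).choose (b + 1)) := by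
  induction m with
  | zero =>
    constructor
    · intro k b hk; exact absurd hk (Nat.not_lt_zero k)
    · intro k b; rw [Nc_zero]; simp
  | succ m ih =>
    have hCW1 : ∀ k b, k < m + 1 → Nc (m + 1) k b true = k.choose b * (m + 1 - k - 1).choose b := by
      intro k b hk
      match k with
      | 0 =>
        rw [V3]
        cases b with
        | zero => simp
        | succ b => simp
      | k' + 1 =>
        have hk' : k' < m := by omega
        match m, ih with
        | m'' + 1, ih =>
          rw [R2]
          rw [ih.1 k' b (by omega)]
          cases b with
          | zero =>
            rw [V2]
            simp
          | succ b'' =>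
            rw [ih.2 k' b'']
            have h1 : (k' + 1).choose (b'' + 1) = k'.choose b'' + k'.choose (b'' + 1) :=
              Nat.choose_succ_succ k' b''
            have h2 : m'' + 1 - k' - 1 = m'' + 1 + 1 - (k' + 1) - 1 := by omega
            rw [← h2, h1]
            ring
    refine ⟨hCW1, ?_⟩
    intro k b
    match m, ih with
    | 0, _ =>
      rw [Nc_one]
      simp
    | m'' + 1, ih =>
      rw [R1]
      rw [ih.2 k b]
      by_cases hk : k < m'' + 1
      · rw [ih.1 k b hk]
        have h3 : m'' + 1 - k - 1 = m'' - k := by omega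
        have h4 : m'' + 1 + 1 - k - 1 = (m'' - k) + 1 := by omega
        rw [h3, h4, Nat.choose_succ_succ (m'' - k) b]
        ring
      · rw [Nc_eq_zero_of_le _ _ _ _ (by omega)]
        have h3 : m'' + 1 - k - 1 = 0 := by omega
        have h4 : m'' + 1 + 1 - k - 1 = 0 := by omega
        rw [h3, h4, Nat.choose_zero_succ]
        simp


/-! ### Bridge to subsets of `Fin n` -/

section Bridge

variable {n : ℕ} [NeZero n]

/-- starts of cyclic runs of a subset of `Fin n`. -/
def starts (S : Finset (Fin n)) : Finset (Fin n) := S.filter (fun j => j - 1 ∉ S)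

/-- previous value function for a `Fin`-indexed word. -/
def prevF (f : Fin n → Bool) (p : Bool) (i : Fin n) : Bool :=
  if h : (i : ℕ) = 0 then p else f ⟨(i : ℕ) - 1, by omega⟩

lemma runsA_ofFn : ∀ {m : ℕ} (p : Bool) (f : Fin m → Bool),
    runsA p (List.ofFn f) = ∑ i : Fin m, (if f i = true ∧ prevF f p i = false then 1 else 0) := by
  intro m
  induction m with
  | zero => intro p f; simp [runsA]
  | succ m ih =>
    intro p f
    rw [List.ofFn_succ, runsA, ih (f 0) (fun i => f i.succ), Fin.sum_univ_succ]
    have h0 : prevF f p 0 = p := by simp [prevF]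
    have hs : ∀ i : Fin m, prevF (fun i => f i.succ) (f 0) i = prevF f p i.succ := by
      intro i
      unfold prevF
      rcases Nat.eq_zero_or_pos (i : ℕ) with h | h
      · rw [dif_pos h, dif_neg (by simp [Fin.val_succ])]
        congr 1
        exact Fin.ext (by simp [Fin.val_succ, h])
      · rw [dif_neg (by omega), dif_neg (by simp [Fin.val_succ])]
        show f (Fin.succ ⟨(i : ℕ) - 1, by omega⟩) = f ⟨((Fin.succ i : Fin (m+1)) : ℕ) - 1, by omega⟩
        refine congrArg f (Fin.ext ?_)
        simp only [Fin.val_succ]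
        omega
    rw [h0]
    congr 1
    apply Finset.sum_congr rfl
    intro i _
    rw [hs i]

lemma count_ofFn : ∀ {m : ℕ} (f : Fin m → Bool),
    (List.ofFn f).count true = ∑ i : Fin m, (if f i = true then 1 else 0) := by
  intro m
  induction m with
  | zero => intro f; simp
  | succ m ih =>
    intro f
    rw [List.ofFn_succ, List.count_cons, ih (fun i => f i.succ), Fin.sum_univ_succ]
    cases h : f 0 <;> simp [h, add_comm]

/-- the word associated to a subset of `Fin n`. -/
def wordOf (S : Finset (Fin n)) : List Bool := List.ofFn (fun i => decide (i ∈ S))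

omit [NeZero n] in
lemma wordOf_mem_WL (S : Finset (Fin n)) : wordOf S ∈ WL n := by
  rw [mem_WL, wordOf, List.length_ofFn]

lemma fin_sub_one_val (hn : 2 ≤ n) (i : Fin n) :
    ((i - 1 : Fin n) : ℕ) = if (i : ℕ) = 0 then n - 1 else (i : ℕ) - 1 := by
  have h1 : ((1 : Fin n) : ℕ) = 1 := by
    rw [Fin.val_one']; exact Nat.one_mod_eq_one.mpr (by omega)
  have hv : ((i - 1 : Fin n) : ℕ) = (n - ((1 : Fin n) : ℕ) + (i : ℕ)) % n := by
    rw [Fin.sub_def]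
  rw [hv, h1]
  rcases Nat.eq_zero_or_pos (i : ℕ) with h | h
  · rw [if_pos h, h, Nat.add_zero, Nat.mod_eq_of_lt (by omega)]
  · rw [if_neg (by omega)]
    have h2 : n - 1 + (i : ℕ) = n + ((i : ℕ) - 1) := by omega
    rw [h2, Nat.add_mod_left]
    exact Nat.mod_eq_of_lt (by have := i.isLt; omega)

omit [NeZero n] in
lemma count_wordOf (S : Finset (Fin n)) : (wordOf S).count true = S.card := by
  rw [wordOf, count_ofFn]
  have h : ∀ i : Fin n, (if decide (i ∈ S) = true then 1 else 0) = if i ∈ S then (1:ℕ) else 0 := by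
    intro i; simp
  simp only [h]
  rw [← Finset.card_filter, Finset.filter_univ_mem]

lemma prevF_wordOf (hn : 2 ≤ n) (S : Finset (Fin n)) (i : Fin n) :
    prevF (fun j => decide (j ∈ S)) (decide (((0 : Fin n) - 1) ∈ S)) i = decide ((i - 1) ∈ S) := by
  unfold prevF
  rcases Nat.eq_zero_or_pos (i : ℕ) with h | h
  · rw [dif_pos h]
    have : i = 0 := Fin.ext (by simpa using h)
    rw [this]
  · rw [dif_neg (by omega)]
    congr 1
    refine Fin.ext ?_
    rw [fin_sub_one_val hn i, if_neg (by omega)]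

lemma runsA_wordOf (hn : 2 ≤ n) (S : Finset (Fin n)) :
    runsA (decide (((0 : Fin n) - 1) ∈ S)) (wordOf S) = (starts S).card := by
  rw [wordOf, runsA_ofFn]
  have hS : starts S = Finset.univ.filter (fun i => i ∈ S ∧ i - 1 ∉ S) := by
    ext t
    simp [starts, Finset.mem_filter]
  rw [hS, Finset.card_filter]
  apply Finset.sum_congr rfl
  intro i _
  rw [prevF_wordOf hn S i]
  by_cases h1 : i ∈ S <;> by_cases h2 : (i - 1) ∈ S <;> simp [h1, h2]

lemma getLast?_wordOf (hn : 2 ≤ n) (S : Finset (Fin n)) :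
    (wordOf S).getLast? = some (decide ((⟨n - 1, by omega⟩ : Fin n) ∈ S)) := by
  rw [wordOf, List.getLast?_eq_getElem?, List.getElem?_ofFn]
  rw [List.length_ofFn]
  rw [dif_pos (by omega)]

lemma head?_wordOf (hn : 2 ≤ n) (S : Finset (Fin n)) :
    (wordOf S).head? = some (decide ((0 : Fin n) ∈ S)) := by
  obtain ⟨m, rfl⟩ : ∃ m, n = m + 2 := ⟨n - 2, by omega⟩
  rw [wordOf, List.ofFn_succ]
  rfl

end Bridge

/-! ### Counting subsets with given size and number of cyclic runs -/

lemma WT_card (n k b : ℕ) (hn : 2 ≤ n) (hk : 1 ≤ k) (hb : 1 ≤ b) :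
    ((WL n).filter (fun l => l.head? = some true ∧ l.count true = k ∧
        runsA false l = b ∧ l.getLast? = some false)).card
      = Nc (n - 1) (k - 1) (b - 1) true := by
  obtain ⟨m, rfl⟩ : ∃ m, n = m + 2 := ⟨n - 2, by omega⟩
  have hne : ∀ t ∈ WL (m + 1), t ≠ [] := by
    intro t ht hnil
    rw [mem_WL] at ht
    simp [hnil] at ht
  rw [show WL (m+2) = (WL (m+1)).image (List.cons true) ∪ (WL (m+1)).image (List.cons false) from rfl]
  rw [Finset.filter_union, Finset.filter_image, Finset.filter_image,
    Finset.card_union_of_disjoint]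
  · rw [Finset.card_image_of_injective _ (List.cons_injective),
      Finset.card_image_of_injective _ (List.cons_injective)]
    have h2 : (WL (m+1)).filter (fun t => (false :: t).head? = some true ∧
        (false :: t).count true = k ∧ runsA false (false :: t) = b ∧
        (false :: t).getLast? = some false) = ∅ := by
      rw [Finset.filter_eq_empty_iff]
      rintro t _ ⟨h, -⟩
      simp at h
    rw [h2, Finset.card_empty, add_zero]
    rw [show (m + 2) - 1 = m + 1 from rfl]
    rw [Nc]
    congr 1
    apply Finset.filter_congr
    intro t ht
    rw [getLast?_cons_of_ne_nil (hne t ht)]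
    simp only [List.head?_cons, List.count_cons, runsA, beq_self_eq_true, if_true,
      eq_self_iff_true, true_and]
    constructor
    · rintro ⟨h1, h2, h3⟩
      refine ⟨by omega, by omega, h3⟩
    · rintro ⟨h1, h2, h3⟩
      refine ⟨by omega, by omega, h3⟩
  · rw [Finset.disjoint_left]
    rintro l hl hl'
    simp only [Finset.mem_image] at hl hl'
    obtain ⟨t, _, rfl⟩ := hl
    obtain ⟨t', _, h⟩ := hl'
    exact absurd (List.head_eq_of_cons_eq h) (by simp)

section FinCount

variable {n : ℕ} [NeZero n]

lemma mem_starts {S : Finset (Fin n)} {t : Fin n} : t ∈ starts S ↔ t ∈ S ∧ t - 1 ∉ S := by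
  simp [starts]

/-- shift of a subset of `Fin n`. -/
def shf (a : Fin n) (S : Finset (Fin n)) : Finset (Fin n) := S.image (· + a)

open Fin.CommRing in
lemma mem_shf {a : Fin n} {S : Finset (Fin n)} {x : Fin n} : x ∈ shf a S ↔ x - a ∈ S := by
  unfold shf
  rw [Finset.mem_image]
  constructor
  · rintro ⟨s, hs, rfl⟩
    simpa using hs
  · intro h
    exact ⟨x - a, h, by ring⟩

lemma card_shf (a : Fin n) (S : Finset (Fin n)) : (shf a S).card = S.card :=
  Finset.card_image_of_injective _ (add_left_injective a)

open Fin.CommRing in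
lemma starts_shf (a : Fin n) (S : Finset (Fin n)) : starts (shf a S) = shf a (starts S) := by
  ext x
  rw [mem_starts, mem_shf, mem_shf, mem_shf, mem_starts]
  have : x - 1 - a = x - a - 1 := by ring
  rw [this]

open Fin.CommRing in
lemma shf_shf (a : Fin n) (S : Finset (Fin n)) : shf a (shf (-a) S) = S := by
  ext x
  rw [mem_shf, mem_shf]
  have : x - a - -a = x := by ring
  rw [this]

/-- subsets of `Fin n` of size `k` with `b` cyclic runs. -/
def Mset (n : ℕ) [NeZero n] (k b : ℕ) : Finset (Finset (Fin n)) :=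
  Finset.univ.filter (fun S => S.card = k ∧ (starts S).card = b)

lemma Mset_rotate (k b : ℕ) (j : Fin n) :
    ((Mset n k b).filter (fun S => j ∈ starts S)).card
      = ((Mset n k b).filter (fun S => (0 : Fin n) ∈ starts S)).card := by
  apply Finset.card_bij' (fun S _ => shf (-j) S) (fun S _ => shf j S)
  · rintro S hS
    simp only [Mset, Finset.mem_filter, Finset.mem_univ, true_and] at hS ⊢
    obtain ⟨⟨h1, h2⟩, h3⟩ := hS
    refine ⟨⟨by rw [card_shf, h1], by rw [starts_shf, card_shf, h2]⟩, ?_⟩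
    rw [starts_shf, mem_shf]
    simpa using h3
  · rintro S hS
    simp only [Mset, Finset.mem_filter, Finset.mem_univ, true_and] at hS ⊢
    obtain ⟨⟨h1, h2⟩, h3⟩ := hS
    refine ⟨⟨by rw [card_shf, h1], by rw [starts_shf, card_shf, h2]⟩, ?_⟩
    rw [starts_shf, mem_shf]
    simpa using h3
  · intro S _
    rw [shf_shf]
  · intro S _
    have := shf_shf (-j) S
    rwa [neg_neg] at this

lemma Mset_double_count (k b : ℕ) :
    b * (Mset n k b).card
      = n * ((Mset n k b).filter (fun S => (0 : Fin n) ∈ starts S)).card := by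
  have h1 : ∀ S ∈ Mset n k b, (starts S).card = b := by
    intro S hS
    simp only [Mset, Finset.mem_filter] at hS
    exact hS.2.2
  have h2 : ∑ S ∈ Mset n k b, (starts S).card = b * (Mset n k b).card := by
    rw [Finset.sum_congr rfl h1, Finset.sum_const, smul_eq_mul, mul_comm]
  rw [← h2]
  have h3 : ∀ S : Finset (Fin n), (starts S).card
      = ∑ j : Fin n, if j ∈ starts S then 1 else 0 := by
    intro S
    rw [← Finset.card_filter]
    congr 1
    exact (Finset.filter_univ_mem _).symm
  calc ∑ S ∈ Mset n k b, (starts S).card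
      = ∑ S ∈ Mset n k b, ∑ j : Fin n, if j ∈ starts S then 1 else 0 := by
        exact Finset.sum_congr rfl (fun S _ => h3 S)
    _ = ∑ j : Fin n, ∑ S ∈ Mset n k b, if j ∈ starts S then 1 else 0 := Finset.sum_comm
    _ = ∑ j : Fin n, ((Mset n k b).filter (fun S => j ∈ starts S)).card := by
        exact Finset.sum_congr rfl (fun j _ => (Finset.card_filter _ _).symm)
    _ = ∑ _j : Fin n, ((Mset n k b).filter (fun S => (0 : Fin n) ∈ starts S)).card := by
        exact Finset.sum_congr rfl (fun j _ => Mset_rotate k b j)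
    _ = n * ((Mset n k b).filter (fun S => (0 : Fin n) ∈ starts S)).card := by
        rw [Finset.sum_const, smul_eq_mul, Finset.card_univ, Fintype.card_fin]

lemma zero_sub_one_val (hn : 2 ≤ n) : (((0 : Fin n) - 1) : Fin n).val = n - 1 := by
  rw [fin_sub_one_val hn 0]
  simp

lemma T0_eq_WT (hn : 2 ≤ n) (k b : ℕ) :
    ((Mset n k b).filter (fun S => (0 : Fin n) ∈ starts S)).card
      = ((WL n).filter (fun l => l.head? = some true ∧ l.count true = k ∧
          runsA false l = b ∧ l.getLast? = some false)).card := by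
  apply Finset.card_bij (fun S _ => wordOf S)
  · rintro S hS
    simp only [Mset, Finset.mem_filter, Finset.mem_univ, true_and] at hS
    obtain ⟨⟨h1, h2⟩, h3⟩ := hS
    rw [mem_starts] at h3
    obtain ⟨h30, h31⟩ := h3
    have hp : decide (((0 : Fin n) - 1) ∈ S) = false := by
      simp only [decide_eq_false_iff_not]; exact h31
    refine Finset.mem_filter.mpr ⟨wordOf_mem_WL S, ?_, ?_, ?_, ?_⟩
    · rw [head?_wordOf hn S]
      simp [h30]
    · rw [count_wordOf, h1]
    · rw [← hp, runsA_wordOf hn S, h2]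
    · rw [getLast?_wordOf hn S]
      have he : (⟨n - 1, by omega⟩ : Fin n) = (0 : Fin n) - 1 :=
        Fin.ext (by rw [zero_sub_one_val hn])
      rw [he, hp]
  · intro S hS S' hS' h
    have : (fun i : Fin n => decide (i ∈ S)) = (fun i : Fin n => decide (i ∈ S')) :=
      List.ofFn_inj.mp h
    ext i
    have hi := congrFun this i
    simpa using hi
  · intro l hl
    rw [Finset.mem_filter] at hl
    obtain ⟨hlW, hhead, hcount, hruns, hlast⟩ := hl
    have hlen : l.length = n := mem_WL.mp hlW
    set S : Finset (Fin n) := Finset.univ.filter (fun i : Fin n => l.getD i.val false = true)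
      with hSdef
    have hmemS : ∀ i : Fin n, i ∈ S ↔ l.getD i.val false = true := by
      intro i
      rw [hSdef, Finset.mem_filter]
      simp
    have hw : wordOf S = l := by
      apply List.ext_getElem
      · rw [wordOf, List.length_ofFn, hlen]
      · intro i h1 h2
        simp only [wordOf, List.getElem_ofFn]
        have hin : i < n := by simpa [wordOf] using h1
        have : (⟨i, hin⟩ : Fin n) ∈ S ↔ l.getD i false = true := hmemS ⟨i, hin⟩
        rw [List.getD_eq_getElem l false h2] at this
        by_cases hb : l[i] = true
        · simp [this, hb]
        · simp [this, hb]
    have hlast' : l.getD (n - 1) false = false := by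
      rw [List.getLast?_eq_getElem?, hlen, List.getElem?_eq_getElem (by omega : n - 1 < l.length)] at hlast
      rw [List.getD_eq_getElem l false (by omega : n - 1 < l.length)]
      simpa using hlast
    have hhead' : l.getD 0 false = true := by
      rw [List.head?_eq_getElem?, List.getElem?_eq_getElem (by omega : 0 < l.length)] at hhead
      rw [List.getD_eq_getElem l false (by omega : 0 < l.length)]
      simpa using hhead
    have hsub : ((0 : Fin n) - 1) ∉ S := by
      rw [hmemS, zero_sub_one_val hn, hlast']
      simp
    have h0 : (0 : Fin n) ∈ S := by
      rw [hmemS]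
      simpa using hhead'
    have hp : decide (((0 : Fin n) - 1) ∈ S) = false := by
      simp only [decide_eq_false_iff_not]; exact hsub
    refine ⟨S, ?_, hw⟩
    simp only [Mset, Finset.mem_filter, Finset.mem_univ, true_and]
    refine ⟨⟨?_, ?_⟩, ?_⟩
    · rw [← count_wordOf S, hw, hcount]
    · rw [← runsA_wordOf hn S, hp, hw, hruns]
    · rw [mem_starts]
      exact ⟨h0, hsub⟩

/-- The key counting lemma. -/
lemma Mset_card_mul (hn : 2 ≤ n) {k b : ℕ} (hk : 1 ≤ k) (hb : 1 ≤ b) (hkn : k < n) :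
    b * (Mset n k b).card
      = n * ((k - 1).choose (b - 1) * (n - k - 1).choose (b - 1)) := by
  rw [Mset_double_count, T0_eq_WT hn, WT_card n k b hn hk hb]
  have h1 : k - 1 < n - 1 := by omega
  rw [(CW (n - 1)).1 (k - 1) (b - 1) h1]
  have h2 : n - 1 - (k - 1) - 1 = n - k - 1 := by omega
  rw [h2]

open Fin.CommRing in
lemma starts_eq_empty {S : Finset (Fin n)} (hS : starts S = ∅) :
    S = ∅ ∨ S = Finset.univ := by
  by_cases hS0 : S = ∅
  · exact Or.inl hS0
  right
  obtain ⟨j, hj⟩ := Finset.nonempty_of_ne_empty hS0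
  have hstep : ∀ t ∈ S, t - 1 ∈ S := by
    intro t ht
    by_contra hc
    have : t ∈ starts S := mem_starts.mpr ⟨ht, hc⟩
    rw [hS] at this
    exact absurd this (Finset.notMem_empty t)
  have hclaim : ∀ m : ℕ, j - (m : Fin n) ∈ S := by
    intro m
    induction m with
    | zero => simpa using hj
    | succ m ih =>
      have : j - ((m + 1 : ℕ) : Fin n) = (j - (m : ℕ)) - 1 := by
        push_cast
        ring
      rw [this]
      exact hstep _ ih
  apply Finset.eq_univ_of_forall
  intro t
  have h1 : j - (((j - t : Fin n) : ℕ) : Fin n) = t := by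
    rw [Fin.cast_val_eq_self]
    exact sub_sub_cancel j t
  rw [← h1]
  exact hclaim _

end FinCount

section Dist

variable {F : Type*} [DecidableEq F] {n : ℕ} [NeZero n]

lemma fin_succ_eq (i : Fin n) :
    (⟨((i : ℕ) + 1) % n, Nat.mod_lt _ i.pos⟩ : Fin n) = i + 1 := by
  apply Fin.ext
  rw [Fin.add_def, Fin.val_one']
  simp [Nat.add_mod]

lemma pairDist_eq (hn : 2 ≤ n) (x y : Fin n → F) :
    pairDist x y = (Finset.univ.filter (fun i => y i ≠ x i)).card
      + (starts (Finset.univ.filter (fun i => y i ≠ x i))).card := by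
  classical
  set D := Finset.univ.filter (fun i => y i ≠ x i) with hD
  have hmemD : ∀ i, i ∈ D ↔ y i ≠ x i := by
    intro i; rw [hD, Finset.mem_filter]; simp
  set E := D.image (· - (1 : Fin n)) with hE
  have hmemE : ∀ i : Fin n, i ∈ E ↔ i + 1 ∈ D := by
    intro i
    rw [hE, Finset.mem_image]
    constructor
    · rintro ⟨s, hs, rfl⟩
      rwa [sub_add_cancel]
    · intro h
      exact ⟨i + 1, h, by rw [add_sub_cancel_right]⟩
  have h1 : pairDist x y = (D ∪ E).card := by
    rw [pairDist]
    congr 1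
    ext i
    simp only [Finset.mem_filter, Finset.mem_union, Finset.mem_univ, true_and]
    rw [fin_succ_eq i, hmemD i, hmemE i, hmemD (i + 1)]
    constructor
    · intro h
      by_contra hc
      push_neg at hc
      exact h (by rw [hc.1, hc.2])
    · rintro (h | h) heq <;> rw [Prod.mk.injEq] at heq
      · exact h heq.1.symm
      · exact h heq.2.symm
  have h2 : (E \ D).card = (starts D).card := by
    refine Finset.card_bij' (fun i _ => i + 1) (fun j _ => j - 1) ?hmapsto ?hinv ?hleft ?hright
    case hmapsto =>
      intro i hi
      rw [Finset.mem_sdiff] at hi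
      obtain ⟨hi1, hi2⟩ := hi
      refine mem_starts.mpr ⟨(hmemE i).mp hi1, ?_⟩
      rwa [add_sub_cancel_right]
    case hinv =>
      intro j hj
      rw [mem_starts] at hj
      obtain ⟨hj1, hj2⟩ := hj
      rw [Finset.mem_sdiff]
      refine ⟨(hmemE _).mpr ?_, hj2⟩
      rwa [sub_add_cancel]
    case hleft =>
      intro i _
      show i + 1 - 1 = i
      rw [add_sub_cancel_right]
    case hright =>
      intro j _
      show j - 1 + 1 = j
      rw [sub_add_cancel]
  rw [h1, Finset.union_comm, ← Finset.card_sdiff_add_card E D, h2, add_comm]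

lemma pairDist_self (x : Fin n → F) : pairDist x x = 0 := by
  rw [pairDist, Finset.card_eq_zero, Finset.filter_eq_empty_iff]
  intro i _
  simp

lemma filter_pairDist_zero (hn : 2 ≤ n) (x : Fin n → F) [Fintype F] :
    (Finset.univ.filter (fun y : Fin n → F => pairDist x y = 0)) = {x} := by
  ext y
  simp only [Finset.mem_filter, Finset.mem_univ, true_and, Finset.mem_singleton]
  constructor
  · intro h
    rw [pairDist_eq hn] at h
    have h0 : (Finset.univ.filter (fun i => y i ≠ x i)).card = 0 := by omega
    rw [Finset.card_eq_zero, Finset.filter_eq_empty_iff] at h0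
    funext i
    have := h0 (Finset.mem_univ i)
    simpa using this
  · rintro rfl
    exact pairDist_self y

lemma card_fiber [Fintype F] (x : Fin n → F) (S : Finset (Fin n)) :
    (Finset.univ.filter (fun y : Fin n → F =>
        Finset.univ.filter (fun i => y i ≠ x i) = S)).card
      = (Fintype.card F - 1) ^ S.card := by
  classical
  have hset : Finset.univ.filter (fun y : Fin n → F =>
        Finset.univ.filter (fun i => y i ≠ x i) = S)
      = Fintype.piFinset (fun j => if j ∈ S then Finset.univ.erase (x j) else {x j}) := by
    ext y
    rw [Finset.mem_filter, Fintype.mem_piFinset]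
    simp only [Finset.mem_univ, true_and]
    constructor
    · intro h j
      have hj : j ∈ S ↔ y j ≠ x j := by
        rw [← h, Finset.mem_filter]; simp
      split_ifs with hjS
      · exact Finset.mem_erase.mpr ⟨hj.mp hjS, Finset.mem_univ _⟩
      · rw [Finset.mem_singleton]
        by_contra hc
        exact hjS (hj.mpr hc)
    · intro h
      ext j
      rw [Finset.mem_filter]
      simp only [Finset.mem_univ, true_and]
      have := h j
      split_ifs at this with hjS
      · rw [Finset.mem_erase] at this
        exact ⟨fun _ => hjS, fun _ => this.1⟩
      · rw [Finset.mem_singleton] at this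
        exact ⟨fun hc => absurd this hc, fun hc => absurd hc hjS⟩
  rw [hset, Fintype.card_piFinset]
  have hcards : ∀ j : Fin n,
      (if j ∈ S then Finset.univ.erase (x j) else ({x j} : Finset F)).card
        = if j ∈ S then Fintype.card F - 1 else 1 := by
    intro j
    split_ifs with hjS
    · rw [Finset.card_erase_of_mem (Finset.mem_univ _), Finset.card_univ]
    · exact Finset.card_singleton _
  calc ∏ j : Fin n, (if j ∈ S then Finset.univ.erase (x j) else ({x j} : Finset F)).card
      = ∏ j : Fin n, (if j ∈ S then Fintype.card F - 1 else 1) :=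
        Finset.prod_congr rfl (fun j _ => hcards j)
    _ = ∏ _j ∈ Finset.univ ∩ S, (Fintype.card F - 1) :=
        Finset.prod_ite_mem Finset.univ S (fun _ => Fintype.card F - 1)
    _ = (Fintype.card F - 1) ^ S.card := by
        rw [Finset.univ_inter, Finset.prod_const]

end Dist

section Main

variable {F : Type*} [Fintype F] [DecidableEq F]

lemma Ni_eq {n : ℕ} [NeZero n] (hn : 2 ≤ n) (x : Fin n → F) {i : ℕ}
    (hi1 : 1 ≤ i) (hin : i ≤ n - 1) :
    (Finset.univ.filter (fun y : Fin n → F => pairDist x y = i)).card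
      = ∑ k ∈ Finset.Icc ((i + 1) / 2) (i - 1),
          (Mset n k (i - k)).card * (Fintype.card F - 1) ^ k := by
  classical
  have hmaps : ∀ y ∈ Finset.univ.filter (fun y : Fin n → F => pairDist x y = i),
      Finset.univ.filter (fun j => y j ≠ x j)
        ∈ Finset.univ.filter (fun S : Finset (Fin n) => S.card + (starts S).card = i) := by
    intro y hy
    rw [Finset.mem_filter] at hy ⊢
    refine ⟨Finset.mem_univ _, ?_⟩
    rw [← pairDist_eq hn x y]
    exact hy.2
  rw [Finset.card_eq_sum_card_fiberwise hmaps]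
  have hfiber : ∀ S ∈ Finset.univ.filter
      (fun S : Finset (Fin n) => S.card + (starts S).card = i),
      ((Finset.univ.filter (fun y : Fin n → F => pairDist x y = i)).filter
          (fun y => Finset.univ.filter (fun j => y j ≠ x j) = S)).card
        = (Fintype.card F - 1) ^ S.card := by
    intro S hS
    rw [Finset.mem_filter] at hS
    rw [Finset.filter_filter]
    have heq : Finset.univ.filter
        (fun y : Fin n → F => pairDist x y = i ∧ Finset.univ.filter (fun j => y j ≠ x j) = S)
        = Finset.univ.filter (fun y : Fin n → F => Finset.univ.filter (fun j => y j ≠ x j) = S) := by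
      apply Finset.filter_congr
      intro y _
      constructor
      · rintro ⟨-, h2⟩; exact h2
      · intro h2
        refine ⟨?_, h2⟩
        rw [pairDist_eq hn x y, h2]
        exact hS.2
    rw [heq]
    exact card_fiber x S
  rw [Finset.sum_congr rfl hfiber]
  have hmaps2 : ∀ S ∈ Finset.univ.filter
      (fun S : Finset (Fin n) => S.card + (starts S).card = i),
      S.card ∈ Finset.Icc ((i + 1) / 2) (i - 1) := by
    intro S hS
    rw [Finset.mem_filter] at hS
    have hble : (starts S).card ≤ S.card :=
      Finset.card_le_card (Finset.filter_subset _ S)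
    have hb1 : 1 ≤ (starts S).card := by
      by_contra hc
      have hb0 : (starts S).card = 0 := by omega
      rw [Finset.card_eq_zero] at hb0
      rcases starts_eq_empty hb0 with h | h
      · rw [h] at hS
        simp [starts] at hS
        omega
      · rw [h] at hS
        rw [Finset.card_univ, Fintype.card_fin] at hS
        omega
    rw [Finset.mem_Icc]
    omega
  rw [← Finset.sum_fiberwise_of_maps_to hmaps2 (fun S => (Fintype.card F - 1) ^ S.card)]
  apply Finset.sum_congr rfl
  intro k hk
  rw [Finset.mem_Icc] at hk
  have hMset : (Finset.univ.filter
      (fun S : Finset (Fin n) => S.card + (starts S).card = i)).filter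
        (fun S => S.card = k) = Mset n k (i - k) := by
    ext S
    rw [Finset.filter_filter, Mset, Finset.mem_filter, Finset.mem_filter]
    simp only [Finset.mem_univ, true_and]
    constructor
    · rintro ⟨h1, h2⟩
      exact ⟨h2, by omega⟩
    · rintro ⟨h1, h2⟩
      exact ⟨by omega, h1⟩
  rw [hMset]
  have hconst : ∀ S ∈ Mset n k (i - k),
      (Fintype.card F - 1) ^ S.card = (Fintype.card F - 1) ^ k := by
    intro S hS
    rw [Mset, Finset.mem_filter] at hS
    rw [hS.2.1]
  rw [Finset.sum_congr rfl hconst, Finset.sum_const, smul_eq_mul]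

lemma Dpair_eq_Mset {n : ℕ} [NeZero n] (hn : 2 ≤ n) {k b : ℕ}
    (hk : 1 ≤ k) (hb : 1 ≤ b) (hkn : k < n) :
    ((Mset n k b).card : ℝ) = Dpair n k b := by
  have key := Mset_card_mul hn hk hb hkn
  have hbR : (b : ℝ) ≠ 0 := by
    simp only [ne_eq, Nat.cast_eq_zero]
    omega
  have keyR : (b : ℝ) * ((Mset n k b).card : ℝ)
      = (n : ℝ) * (((k - 1).choose (b - 1) : ℝ) * ((n - k - 1).choose (b - 1) : ℝ)) := by
    exact_mod_cast key
  rw [Dpair]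
  field_simp
  linear_combination keyR

lemma part2 {n : ℕ} (hn : 2 ≤ n) (ℓ w : ℕ) (hw : 1 ≤ w) (hwl : w ≤ ℓ)
    (hlw : ℓ + w ≤ n - 1) :
    Dpair n ℓ w =
      ((ℓ - 1).choose (w - 1) : ℝ) *
          (((n - ℓ - 1).choose w : ℝ) + 2 * ((n - ℓ - 1).choose (w - 1) : ℝ)) +
        ((n - ℓ - 1).choose (w - 1) : ℝ) * ((ℓ - 1).choose w : ℝ) := by
  set m := n - ℓ - 1 with hm
  set a := (ℓ - 1).choose (w - 1) with ha
  set c := m.choose (w - 1) with hc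
  set A := m.choose w with hA
  set B := (ℓ - 1).choose w with hB
  have hw1 : w - 1 + 1 = w := by omega
  have hAw : A * w = c * (m - (w - 1)) := by
    have := Nat.choose_succ_right_eq m (w - 1)
    rwa [hw1] at this
  have hBw : B * w = a * (ℓ - 1 - (w - 1)) := by
    have := Nat.choose_succ_right_eq (ℓ - 1) (w - 1)
    rwa [hw1] at this
  have keyN : (a * (A + 2 * c) + c * B) * w = n * (a * c) := by
    calc (a * (A + 2 * c) + c * B) * w
        = a * (A * w) + 2 * (a * c) * w + c * (B * w) := by ring
      _ = a * (c * (m - (w - 1))) + 2 * (a * c) * w + c * (a * (ℓ - 1 - (w - 1))) := by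
          rw [hAw, hBw]
      _ = (a * c) * ((m - (w - 1)) + 2 * w + (ℓ - 1 - (w - 1))) := by ring
      _ = (a * c) * n := by
          congr 1
          have hm' : w ≤ m := by omega
          omega
      _ = n * (a * c) := mul_comm _ _
  have keyR : ((a * (A + 2 * c) + c * B : ℕ) : ℝ) * (w : ℝ) = (n : ℝ) * ((a : ℕ) * (c : ℕ) : ℝ) := by
    exact_mod_cast keyN
  push_cast at keyR
  have hwR : (w : ℝ) ≠ 0 := by
    simp only [ne_eq, Nat.cast_eq_zero]
    omega
  rw [Dpair, ← hm, ← ha, ← hc]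
  field_simp
  linear_combination -keyR

end Main

end SPB

/-- For any `x ∈ F_q^n` (`n ≥ 2`) and integer `0 ≤ d ≤ n − 1`, the symbol-pair ball
satisfies `|B_P(x,d)| = 1 + Σ_{i=1}^{d} Σ_{k=⌈i/2⌉}^{i−1} D(n,k,i−k)·(q−1)^k`, where
`D(n,ℓ,w) = (n/w)·C(ℓ−1,w−1)·C(n−ℓ−1,w−1)`; moreover `D(n,ℓ,w)` also equals
`C(ℓ−1,w−1)·[C(n−ℓ−1,w) + 2·C(n−ℓ−1,w−1)] + C(n−ℓ−1,w−1)·C(ℓ−1,w)`. -/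
theorem pairBall_card {F : Type*} [Field F] [Fintype F] [DecidableEq F]
    {n q d : ℕ} (hq : Fintype.card F = q) (hn : 2 ≤ n) (hd : d ≤ n - 1)
    (x : Fin n → F) :
    (((pairBall x d).card : ℝ) =
      1 + ∑ i ∈ Finset.Icc 1 d, ∑ k ∈ Finset.Icc ((i + 1) / 2) (i - 1),
        Dpair n k (i - k) * ((q : ℝ) - 1) ^ k) ∧
    (∀ ℓ w : ℕ, 1 ≤ w → w ≤ ℓ → ℓ + w ≤ n - 1 →
      Dpair n ℓ w =
        ((ℓ - 1).choose (w - 1) : ℝ) *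
            (((n - ℓ - 1).choose w : ℝ) + 2 * ((n - ℓ - 1).choose (w - 1) : ℝ)) +
          ((n - ℓ - 1).choose (w - 1) : ℝ) * ((ℓ - 1).choose w : ℝ)) := by
  haveI : NeZero n := ⟨by omega⟩
  have hq1 : 1 ≤ q := by rw [← hq]; exact Fintype.card_pos
  refine ⟨?_, fun ℓ w hw hwl hlw => SPB.part2 hn ℓ w hw hwl hlw⟩
  classical
  -- partition the ball by exact distance
  have hmaps : ∀ y ∈ pairBall x d, pairDist x y ∈ Finset.range (d + 1) := by
    intro y hy
    rw [pairBall, Finset.mem_filter] at hy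
    rw [Finset.mem_range]
    omega
  have hpart := Finset.card_eq_sum_card_fiberwise hmaps
  have hfib : ∀ i ∈ Finset.range (d + 1),
      (pairBall x d).filter (fun y => pairDist x y = i)
        = Finset.univ.filter (fun y : Fin n → F => pairDist x y = i) := by
    intro i hi
    rw [Finset.mem_range] at hi
    rw [pairBall, Finset.filter_filter]
    apply Finset.filter_congr
    intro y _
    constructor
    · rintro ⟨-, h2⟩; exact h2
    · intro h2; exact ⟨by omega, h2⟩
  have hfib' : ∀ i ∈ Finset.range (d + 1),
      ((pairBall x d).filter (fun y => pairDist x y = i)).card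
        = (Finset.univ.filter (fun y : Fin n → F => pairDist x y = i)).card :=
    fun i hi => by rw [hfib i hi]
  rw [Finset.sum_congr rfl hfib'] at hpart
  have hsplit : Finset.range (d + 1) = insert 0 (Finset.Icc 1 d) := by
    ext j
    simp only [Finset.mem_range, Finset.mem_insert, Finset.mem_Icc]
    omega
  rw [hsplit, Finset.sum_insert (by simp)] at hpart
  rw [SPB.filter_pairDist_zero hn x, Finset.card_singleton] at hpart
  rw [hpart]
  push_cast
  congr 1
  apply Finset.sum_congr rfl
  intro i hi
  rw [Finset.mem_Icc] at hi
  rw [SPB.Ni_eq hn x hi.1 (by omega)]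
  push_cast
  apply Finset.sum_congr rfl
  intro k hk
  rw [Finset.mem_Icc] at hk
  have hk1 : 1 ≤ k := by omega
  have hb1 : 1 ≤ i - k := by omega
  have hkn : k < n := by omega
  rw [← SPB.Dpair_eq_Mset hn hk1 hb1 hkn]
  have hcast : ((Fintype.card F - 1 : ℕ) : ℝ) = (q : ℝ) - 1 := by
    rw [hq]
    push_cast [Nat.cast_sub hq1]
    ring
  rw [hcast]
end

section
/- (Johnson-type bound for symbol-pair codes) Let C ⊆ F_q^n be a code with minimum pair distance d, let δ = d/n, and assume q²δ ≤ q² − 1. Then C is (τn, 2(q²−1)·n·d)_P-list decodable, where τ = ((q²−1)/q²)·(1 − √(1 − q²δ/(q²−1))). -/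
open scoped RealInnerProductSpace

set_option maxHeartbeats 1000000


open scoped Classical

/-- A code `C ⊆ F_q^n` is `(r, L)_P`-list decodable if every symbol-pair ball of
radius `r` contains at most `L` codewords of `C`. -/
noncomputable def pairListDecodable {F : Type*} [Fintype F] [DecidableEq F] {n : ℕ}
    (C : Finset (Fin n → F)) (r : ℝ) (L : ℕ) : Prop :=
  ∀ y : Fin n → F, (C.filter fun c => (pairDist y c : ℝ) ≤ r).card ≤ L


lemma card_le_two_finrank_aux {E : Type*} [NormedAddCommGroup E] [InnerProductSpace ℝ E]
    [FiniteDimensional ℝ E] (N : ℕ) : ∀ (s : Finset E), s.card ≤ N → (0:E) ∉ s →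
    (∀ x ∈ s, ∀ y ∈ s, x ≠ y → ⟪x, y⟫ ≤ 0) →
    s.card ≤ 2 * Module.finrank ℝ (Submodule.span ℝ (s : Set E)) := by
  induction N with
  | zero => intro s hs _ _; omega
  | succ N ih =>
    intro s hs h0 hp
    rcases s.eq_empty_or_nonempty with rfl | ⟨v, hv⟩
    · simp
    have hvne : v ≠ 0 := fun h => h0 (h ▸ hv)
    have hvnorm : (0:ℝ) < ‖v‖^2 := by
      have : (0:ℝ) < ‖v‖ := norm_pos_iff.2 hvne
      positivity
    set p : E → E := fun x => x - (⟪v, x⟫ / ‖v‖^2) • v with hpdef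
    have hip : ∀ x y : E, ⟪p x, p y⟫ = ⟪x,y⟫ - ⟪v,x⟫ * ⟪v,y⟫ / ‖v‖^2 := by
      intro x y
      simp only [hpdef, inner_sub_left, inner_sub_right, real_inner_smul_left,
        real_inner_smul_right, real_inner_self_eq_norm_sq]
      rw [real_inner_comm y v, real_inner_comm x v]
      field_simp
      ring
    have hvp : ∀ x : E, ⟪v, p x⟫ = 0 := by
      intro x
      simp only [hpdef, inner_sub_right, real_inner_smul_right, real_inner_self_eq_norm_sq]
      field_simp
      ring
    set t := s.erase v with htdef
    have htip : ∀ x ∈ t, ⟪v, x⟫ ≤ 0 := fun x hx =>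
      hp v hv x (s.erase_subset v hx) (Ne.symm (s.ne_of_mem_erase hx))
    set t₁ := t.filter (fun x => ¬ p x = 0) with ht1def
    set t₀ := t.filter (fun x => p x = 0) with ht0def
    -- t₀ has at most one element
    have ht0 : t₀.card ≤ 1 := by
      apply Finset.card_le_one.2
      intro a ha b hb
      rw [ht0def, Finset.mem_filter] at ha hb
      by_contra hab
      have hca : a = (⟪v, a⟫ / ‖v‖^2) • v := by
        have := ha.2; rw [hpdef] at this; simpa [sub_eq_zero] using this
      have hcb : b = (⟪v, b⟫ / ‖v‖^2) • v := by
        have := hb.2; rw [hpdef] at this; simpa [sub_eq_zero] using this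
      have hane : a ≠ 0 := fun h => h0 (h ▸ s.erase_subset v ha.1)
      have hbne : b ≠ 0 := fun h => h0 (h ▸ s.erase_subset v hb.1)
      have hcal : ⟪v, a⟫ < 0 := by
        rcases lt_or_eq_of_le (htip a ha.1) with h | h
        · exact h
        · exact absurd (by rw [hca, h]; simp) hane
      have hcbl : ⟪v, b⟫ < 0 := by
        rcases lt_or_eq_of_le (htip b hb.1) with h | h
        · exact h
        · exact absurd (by rw [hcb, h]; simp) hbne
      have hipab : ⟪a, b⟫ ≤ 0 :=
        hp a (s.erase_subset v ha.1) b (s.erase_subset v hb.1) hab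
      rw [hca, hcb, real_inner_smul_left, real_inner_smul_right,
        real_inner_self_eq_norm_sq] at hipab
      rw [div_mul_cancel₀ _ (ne_of_gt hvnorm)] at hipab
      have hprod : (0:ℝ) < ⟪v, a⟫ / ‖v‖^2 * ⟪v, b⟫ :=
        mul_pos_of_neg_of_neg (div_neg_of_neg_of_pos hcal hvnorm) hcbl
      linarith
    set t' := t₁.image p with ht'def
    have hpple : ∀ a ∈ t, ∀ b ∈ t, a ≠ b → ⟪p a, p b⟫ ≤ 0 := by
      intro a ha b hb hab
      rw [hip]
      have h2 : ⟪a, b⟫ ≤ 0 :=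
        hp a (s.erase_subset v ha) b (s.erase_subset v hb) hab
      have h3 := htip a ha
      have h4 := htip b hb
      have h5 : (0:ℝ) ≤ ⟪v,a⟫ * ⟪v,b⟫ / ‖v‖^2 := by
        have h6 := mul_nonneg (neg_nonneg.2 h3) (neg_nonneg.2 h4)
        rw [neg_mul_neg] at h6
        exact div_nonneg h6 (le_of_lt hvnorm)
      linarith
    have hinj : Set.InjOn p ↑t₁ := by
      intro a ha b hb hab
      by_contra hne
      have ha' := Finset.mem_filter.1 ha
      have hb' := Finset.mem_filter.1 hb
      have h1 : ⟪p a, p b⟫ ≤ 0 := hpple a ha'.1 b hb'.1 hne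
      rw [hab, real_inner_self_eq_norm_sq] at h1
      have : p b = 0 := by
        have : ‖p b‖ = 0 := by nlinarith [norm_nonneg (p b)]
        simpa using this
      exact hb'.2 this
    have ht'card : t'.card = t₁.card := Finset.card_image_of_injOn hinj
    have ht'0 : (0:E) ∉ t' := by
      intro h
      rcases Finset.mem_image.1 h with ⟨a, ha, hpa⟩
      exact (Finset.mem_filter.1 ha).2 hpa
    have ht'p : ∀ x ∈ t', ∀ y ∈ t', x ≠ y → ⟪x, y⟫ ≤ 0 := by
      intro x hx y hy hxy
      rcases Finset.mem_image.1 hx with ⟨a, ha, rfl⟩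
      rcases Finset.mem_image.1 hy with ⟨b, hb, rfl⟩
      have hab : a ≠ b := fun h => hxy (by rw [h])
      exact hpple a (Finset.mem_filter.1 ha).1 b (Finset.mem_filter.1 hb).1 hab
    have hcard1 : t.card + 1 = s.card := Finset.card_erase_add_one hv
    have hcard2 : t₀.card + t₁.card = t.card :=
      Finset.card_filter_add_card_filter_not (p := fun x => p x = 0)
    have ht'N : t'.card ≤ N := by omega
    have hIH := ih t' ht'N ht'0 ht'p
    -- span t' < span s
    have hsub : Submodule.span ℝ (t' : Set E) ≤ Submodule.span ℝ (s : Set E) := by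
      rw [Submodule.span_le]
      intro a ha
      rcases Finset.mem_image.1 (by exact_mod_cast ha) with ⟨x, hx, rfl⟩
      have hxs : x ∈ s := s.erase_subset v (Finset.mem_filter.1 hx).1
      have h1 : x ∈ Submodule.span ℝ (s : Set E) := Submodule.subset_span hxs
      have h2 : v ∈ Submodule.span ℝ (s : Set E) := Submodule.subset_span hv
      exact Submodule.sub_mem _ h1 (Submodule.smul_mem _ _ h2)
    have hvnot : v ∉ Submodule.span ℝ (t' : Set E) := by
      intro hmem
      have horto : Submodule.span ℝ (t' : Set E) ≤ (ℝ ∙ v)ᗮ := by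
        rw [Submodule.span_le]
        intro a ha
        rcases Finset.mem_image.1 (by exact_mod_cast ha) with ⟨x, hx, rfl⟩
        rw [SetLike.mem_coe, Submodule.mem_orthogonal]
        intro u hu
        rcases Submodule.mem_span_singleton.1 hu with ⟨c, rfl⟩
        rw [real_inner_smul_left, hvp x, mul_zero]
      have := horto hmem (v) (Submodule.mem_span_singleton_self v)
      rw [real_inner_self_eq_norm_sq] at this
      nlinarith
    have hlt : Submodule.span ℝ (t' : Set E) < Submodule.span ℝ (s : Set E) :=
      lt_of_le_of_ne hsub (fun h => hvnot (h ▸ Submodule.subset_span hv))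
    have hrank := Submodule.finrank_lt_finrank_of_lt hlt
    omega

section JH
variable {σ : Type*} [Fintype σ] {n : ℕ}

noncomputable def wvec [DecidableEq σ] (u : Fin n → σ) : EuclideanSpace ℝ (Fin n × σ) :=
  WithLp.toLp 2 (fun ja : Fin n × σ => if u ja.1 = ja.2 then 1 else 0)

noncomputable def onevec : EuclideanSpace ℝ (Fin n × σ) := WithLp.toLp 2 (fun _ => 1)

lemma inner_wvec_wvec [DecidableEq σ] (u v : Fin n → σ) :
    ⟪wvec u, wvec v⟫ = (n : ℝ) - hammingDist u v := by
  rw [PiLp.inner_apply]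
  simp only [RCLike.inner_apply, conj_trivial, wvec, PiLp.toLp_apply]
  rw [Fintype.sum_prod_type]
  have h1 : ∀ j : Fin n, (∑ a : σ, (if u j = a then (1:ℝ) else 0) * (if v j = a then 1 else 0))
      = if u j = v j then 1 else 0 := by
    intro j
    rcases eq_or_ne (u j) (v j) with h | h
    · rw [h]; simp [Finset.sum_ite_eq]
    · rw [if_neg h]
      apply Finset.sum_eq_zero
      intro a _
      rcases eq_or_ne (u j) a with h2 | h2
      · have : v j ≠ a := fun hh => h (h2.trans hh.symm)
        simp [this]
      · simp [h2]
  rw [show (∑ x : Fin n, ∑ y : σ, (if v (x, y).1 = (x, y).2 then (1:ℝ) else 0) *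
      if u (x, y).1 = (x, y).2 then 1 else 0) = ∑ j : Fin n, if u j = v j then (1:ℝ) else 0 from
    Finset.sum_congr rfl (fun j _ => by
      rw [← h1 j]; exact Finset.sum_congr rfl (fun a _ => mul_comm _ _))]
  rw [Finset.sum_boole]
  rw [hammingDist]
  have := Finset.card_filter_add_card_filter_not (s := (Finset.univ : Finset (Fin n)))
    (p := fun j => u j = v j)
  have hcast : ({j | u j = v j} : Finset (Fin n)).card
      + ({j | ¬ u j = v j} : Finset (Fin n)).card = n := by
    simpa using this
  have : (({j | u j ≠ v j} : Finset (Fin n)).card : ℝ)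
      = (({j | ¬ u j = v j} : Finset (Fin n)).card : ℝ) := by norm_cast
  rw [this]
  have h2 : ((({j | u j = v j} : Finset (Fin n)).card : ℝ))
      + (({j | ¬ u j = v j} : Finset (Fin n)).card : ℝ) = n := by exact_mod_cast hcast
  linarith

lemma inner_wvec_onevec [DecidableEq σ] (u : Fin n → σ) : ⟪wvec u, (onevec : EuclideanSpace ℝ (Fin n × σ))⟫ = (n : ℝ) := by
  rw [PiLp.inner_apply]
  simp only [RCLike.inner_apply, conj_trivial, wvec, onevec, PiLp.toLp_apply, mul_one]
  rw [Fintype.sum_prod_type]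
  simp [Finset.sum_ite_eq]

lemma inner_onevec_onevec : ⟪(onevec : EuclideanSpace ℝ (Fin n × σ)), onevec⟫ = (n : ℝ) * Fintype.card σ := by
  rw [PiLp.inner_apply]
  simp only [RCLike.inner_apply, conj_trivial, onevec, PiLp.toLp_apply, mul_one]
  simp [Fintype.card_prod, mul_comm]

end JH

lemma inner_onevec_wvec {σ : Type*} [Fintype σ] [DecidableEq σ] {n : ℕ} (u : Fin n → σ) :
    ⟪(onevec : EuclideanSpace ℝ (Fin n × σ)), wvec u⟫ = (n : ℝ) := by
  rw [real_inner_comm]; exact inner_wvec_onevec u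

lemma johnson_hamming {σ : Type*} [Fintype σ] [DecidableEq σ] {n Q d : ℕ}
    (hQ : Fintype.card σ = Q) (hQ2 : 2 ≤ Q) (hn : 0 < n) (hd1 : 1 ≤ d)
    (hδ : (Q:ℝ) * ((d:ℝ)/n) ≤ (Q:ℝ) - 1)
    (y : Fin n → σ) (T : Finset (Fin n → σ))
    (hTd : ∀ u ∈ T, ∀ v ∈ T, u ≠ v → d ≤ hammingDist u v)
    (hTr : ∀ u ∈ T, (hammingDist y u : ℝ) ≤
      (((Q:ℝ)-1)/Q * (1 - Real.sqrt (1 - (Q:ℝ)*((d:ℝ)/n)/((Q:ℝ)-1)))) * n) :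
    T.card ≤ 2 * (n * (Q - 1)) := by
  set s := Real.sqrt (1 - (Q:ℝ)*((d:ℝ)/n)/((Q:ℝ)-1)) with hsdef
  have hQR : (2:ℝ) ≤ Q := by exact_mod_cast hQ2
  have hQ0 : (0:ℝ) < Q := by linarith
  have hQ1 : (0:ℝ) < (Q:ℝ) - 1 := by linarith
  have hnR : (0:ℝ) < n := by exact_mod_cast hn
  have hdR : (1:ℝ) ≤ d := by exact_mod_cast hd1
  have harg0 : 0 ≤ 1 - (Q:ℝ)*((d:ℝ)/n)/((Q:ℝ)-1) := by
    rw [sub_nonneg, div_le_one hQ1]; exact hδ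
  have harg1 : 1 - (Q:ℝ)*((d:ℝ)/n)/((Q:ℝ)-1) < 1 := by
    have : 0 < (Q:ℝ)*((d:ℝ)/n)/((Q:ℝ)-1) := by positivity
    linarith
  have hs0 : 0 ≤ s := Real.sqrt_nonneg _
  have hs1 : s < 1 := by
    rw [hsdef]
    calc Real.sqrt _ < Real.sqrt 1 := Real.sqrt_lt_sqrt harg0 harg1
    _ = 1 := Real.sqrt_one
  have hssq : s^2 = 1 - (Q:ℝ)*((d:ℝ)/n)/((Q:ℝ)-1) := Real.sq_sqrt harg0
  have hdeq : (Q:ℝ) * d = ((Q:ℝ)-1) * (1 - s^2) * n := by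
    rw [hssq]; field_simp; ring
  set r : ℝ := (((Q:ℝ)-1)/Q * (1 - s)) * n with hrdef
  set f : EuclideanSpace ℝ (Fin n × σ) := s • wvec y + ((1-s)/Q) • onevec with hfdef
  set z : (Fin n → σ) → EuclideanSpace ℝ (Fin n × σ) := fun u => wvec u - f with hzdef
  have hwf : ∀ u : Fin n → σ, ⟪wvec u, f⟫ = s * ((n:ℝ) - hammingDist y u) + (1-s)/Q * n := by
    intro u
    rw [hfdef, inner_add_right, real_inner_smul_right, real_inner_smul_right,
      inner_wvec_onevec, inner_wvec_wvec, hammingDist_comm u y]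
  have hff : ⟪f, f⟫ = s^2*n + 2*s*(1-s)/Q*n + (1-s)^2/Q*n := by
    simp only [hfdef, inner_add_left, inner_add_right, real_inner_smul_left,
      real_inner_smul_right, inner_wvec_wvec, inner_wvec_onevec, inner_onevec_onevec,
      inner_onevec_wvec, hQ, hammingDist_self, Nat.cast_zero]
    field_simp
    ring
  have hzz : ∀ u v : Fin n → σ, ⟪z u, z v⟫ = ((n:ℝ) - hammingDist u v)
      - (s * ((n:ℝ) - hammingDist y v) + (1-s)/Q * n)
      - (s * ((n:ℝ) - hammingDist y u) + (1-s)/Q * n)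
      + (s^2*n + 2*s*(1-s)/Q*n + (1-s)^2/Q*n) := by
    intro u v
    rw [hzdef]
    simp only
    have hfw : ⟪f, wvec v⟫ = s * ((n:ℝ) - hammingDist y v) + (1-s)/Q * n := by
      rw [real_inner_comm]; exact hwf v
    rw [inner_sub_left, inner_sub_right, inner_sub_right, inner_wvec_wvec, hwf, hfw, hff]
    ring
  have hzero : (n:ℝ) - d - (s * ((n:ℝ) - r) + (1-s)/Q * n)
      - (s * ((n:ℝ) - r) + (1-s)/Q * n)
      + (s^2*n + 2*s*(1-s)/Q*n + (1-s)^2/Q*n) = 0 := by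
    rw [hrdef]
    have hQne : (Q:ℝ) ≠ 0 := ne_of_gt hQ0
    field_simp
    linear_combination (-(1:ℝ)) * hdeq
  have hzzle : ∀ u ∈ T, ∀ v ∈ T, u ≠ v → ⟪z u, z v⟫ ≤ 0 := by
    intro u hu v hv huv
    rw [hzz]
    have h1 := hTr u hu
    have h2 := hTr v hv
    have h3 : (d:ℝ) ≤ hammingDist u v := by exact_mod_cast hTd u hu v hv huv
    have hsu : s * (hammingDist y u : ℝ) ≤ s * r := mul_le_mul_of_nonneg_left h1 hs0
    have hsv : s * (hammingDist y v : ℝ) ≤ s * r := mul_le_mul_of_nonneg_left h2 hs0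
    nlinarith [hzero]
  -- z u is never zero
  have hz0 : ∀ u : Fin n → σ, z u ≠ 0 := by
    intro u h
    have hcard1 : 1 < Fintype.card σ := by omega
    obtain ⟨a, ha⟩ := Fintype.exists_ne_of_one_lt_card hcard1 (u ⟨0, hn⟩)
    have h2 : z u ((⟨0, hn⟩ : Fin n), a) = 0 := by rw [h]; rfl
    simp only [hzdef, hfdef, PiLp.sub_apply, PiLp.add_apply, PiLp.smul_apply,
      smul_eq_mul, wvec, onevec, PiLp.toLp_apply] at h2
    rw [if_neg (Ne.symm ha)] at h2
    have hpos : 0 < (1-s)/(Q:ℝ) := div_pos (by linarith) hQ0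
    rcases eq_or_ne (y ⟨0, hn⟩) a with h4 | h4
    · rw [if_pos h4] at h2; nlinarith
    · rw [if_neg h4] at h2; nlinarith
  -- injectivity
  have hwinj : ∀ u v : Fin n → σ, wvec u = wvec v → u = v := by
    intro u v h
    funext j
    have h2 : (wvec u : EuclideanSpace ℝ (Fin n × σ)) (j, u j) = wvec v (j, u j) := by rw [h]
    simp only [wvec, PiLp.toLp_apply, if_pos rfl] at h2
    rcases eq_or_ne (v j) (u j) with h3 | h3
    · exact h3.symm
    · rw [if_neg h3] at h2; norm_num at h2
  have hzinj : Set.InjOn z ↑T := by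
    intro u _ v _ h
    rw [hzdef] at h
    simp only [sub_left_inj] at h
    exact hwinj u v h
  set Z := T.image z with hZdef
  have hZcard : Z.card = T.card := Finset.card_image_of_injOn hzinj
  have hZ0 : (0 : EuclideanSpace ℝ (Fin n × σ)) ∉ Z := by
    intro h
    rcases Finset.mem_image.1 h with ⟨u, _, hu⟩
    exact hz0 u hu
  have hZp : ∀ x ∈ Z, ∀ w ∈ Z, x ≠ w → ⟪x, w⟫ ≤ 0 := by
    intro x hx w hw hxw
    rcases Finset.mem_image.1 hx with ⟨u, hu, rfl⟩
    rcases Finset.mem_image.1 hw with ⟨v, hv, rfl⟩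
    exact hzzle u hu v hv (fun h => hxw (by rw [h]))
  have hmain := card_le_two_finrank_aux Z.card Z le_rfl hZ0 hZp
  -- the kernel subspace
  have hσne : Nonempty σ := by
    rw [← Fintype.card_pos_iff]; omega
  obtain ⟨a₀⟩ := hσne
  set L : EuclideanSpace ℝ (Fin n × σ) →ₗ[ℝ] (Fin n → ℝ) :=
    { toFun := fun g j => ∑ a : σ, g (j, a),
      map_add' := by intro g h; funext j; simp [Finset.sum_add_distrib]
      map_smul' := by intro c g; funext j; simp [Finset.mul_sum] } with hLdef
  have hsumw : ∀ (u : Fin n → σ) (j : Fin n), ∑ a : σ, (wvec u : EuclideanSpace ℝ (Fin n × σ)) (j, a) = 1 := by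
    intro u j; simp [wvec, Finset.sum_ite_eq]
  have hsumf : ∀ j : Fin n, ∑ a : σ, f (j, a) = 1 := by
    intro j
    have hfa : ∀ a : σ, f (j, a) = s * (if y j = a then (1:ℝ) else 0) + (1-s)/Q := by
      intro a
      simp [hfdef, PiLp.add_apply, PiLp.smul_apply, smul_eq_mul, wvec, onevec]
    have h1 : (∑ a : σ, if y j = a then (1:ℝ) else 0) = 1 := by simp [Finset.sum_ite_eq]
    rw [Finset.sum_congr rfl (fun a _ => hfa a), Finset.sum_add_distrib, ← Finset.mul_sum, h1,
      Finset.sum_const, Finset.card_univ, hQ, nsmul_eq_mul, mul_one]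
    field_simp
    ring
  have hLz : ∀ u : Fin n → σ, L (z u) = 0 := by
    intro u
    funext j
    have hstep : L (z u) j = (∑ a : σ, (wvec u : EuclideanSpace ℝ (Fin n × σ)) (j, a)) - ∑ a : σ, f (j, a) := by
      simp [hLdef, hzdef, PiLp.sub_apply, Finset.sum_sub_distrib]
    rw [Pi.zero_apply, hstep, hsumw, hsumf]
    ring
  have hLsurj : Function.Surjective L := by
    intro h
    refine ⟨WithLp.toLp 2 (fun ja : Fin n × σ => if ja.2 = a₀ then h ja.1 else 0), ?_⟩
    funext j
    simp only [hLdef, LinearMap.coe_mk, AddHom.coe_mk]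
    simp [Finset.sum_ite_eq']
  have hrange : LinearMap.range L = ⊤ := LinearMap.range_eq_top.2 hLsurj
  have hrank := LinearMap.finrank_range_add_finrank_ker L
  rw [hrange, finrank_top] at hrank
  have hE : Module.finrank ℝ (EuclideanSpace ℝ (Fin n × σ)) = n * Q := by
    rw [finrank_euclideanSpace]
    simp [Fintype.card_prod, hQ]
  have hfun : Module.finrank ℝ (Fin n → ℝ) = n := by
    simp [Module.finrank_fintype_fun_eq_card]
  rw [hE, hfun] at hrank
  have hspan : Submodule.span ℝ (Z : Set (EuclideanSpace ℝ (Fin n × σ))) ≤ LinearMap.ker L := by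
    rw [Submodule.span_le]
    intro x hx
    rcases Finset.mem_image.1 (by exact_mod_cast hx) with ⟨u, _, rfl⟩
    exact LinearMap.mem_ker.2 (hLz u)
  have hfr : Module.finrank ℝ (Submodule.span ℝ (Z : Set (EuclideanSpace ℝ (Fin n × σ))))
      ≤ Module.finrank ℝ (LinearMap.ker L) := Submodule.finrank_mono hspan
  have hkerrank : Module.finrank ℝ (LinearMap.ker L) = n * Q - n := by omega
  have hQ1n : n * (Q - 1) = n * Q - n := by
    cases Q with
    | zero => omega
    | succ Q' => simp [Nat.mul_succ]
  rw [hQ1n]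
  omega

def pread {F : Type*} {n : ℕ} (x : Fin n → F) : Fin n → F × F :=
  fun i => (x i, x ⟨(i.1 + 1) % n, Nat.mod_lt _ i.pos⟩)

lemma pairDist_eq_hamming {F : Type*} [DecidableEq F] {n : ℕ} (x y : Fin n → F) :
    pairDist x y = hammingDist (pread x) (pread y) := by
  rw [pairDist, hammingDist]
  congr 1

lemma pread_injective {F : Type*} {n : ℕ} : Function.Injective (pread (F := F) (n := n)) := by
  intro x y h
  funext i
  exact (Prod.ext_iff.1 (congrFun h i)).1


/-- (Johnson-type bound for symbol-pair codes) Let `C ⊆ F_q^n` be a code with minimum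
pair distance `d`, let `δ = d/n`, and assume `q²δ ≤ q² − 1`. Then `C` is
`(τn, 2(q²−1)·n·d)_P`-list decodable, where
`τ = ((q²−1)/q²)·(1 − √(1 − q²δ/(q²−1)))`. -/
theorem johnson_type_bound_pair {F : Type*} [Field F] [Fintype F] [DecidableEq F]
    {q n d : ℕ} (hq : Fintype.card F = q) (hn : 0 < n)
    (C : Finset (Fin n → F)) (hC : 2 ≤ C.card) (hd : minPairDist C = d)
    (hδ : (q : ℝ) ^ 2 * ((d : ℝ) / n) ≤ (q : ℝ) ^ 2 - 1) :
    pairListDecodable C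
      ((((q : ℝ) ^ 2 - 1) / (q : ℝ) ^ 2 *
          (1 - Real.sqrt (1 - (q : ℝ) ^ 2 * ((d : ℝ) / n) / ((q : ℝ) ^ 2 - 1)))) * n)
      (2 * (q ^ 2 - 1) * n * d) := by
  intro y
  have hq2 : 2 ≤ q := by
    have h1 : 1 < Fintype.card F := Fintype.one_lt_card
    omega
  have hQ2 : 2 ≤ q ^ 2 := le_trans hq2 (Nat.le_self_pow (by norm_num) q)
  have hQcard : Fintype.card (F × F) = q ^ 2 := by
    rw [Fintype.card_prod, hq]; ring
  have hcR : ((q ^ 2 : ℕ) : ℝ) = (q : ℝ) ^ 2 := by push_cast; ring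
  have hd1 : 1 ≤ d := by
    rcases Finset.one_lt_card.1 hC with ⟨x, hx, z, hz, hxz⟩
    by_contra h
    have hd0 : d = 0 := by omega
    have hS : minPairDist C = 0 := by rw [hd, hd0]
    rw [minPairDist] at hS
    rcases Nat.sInf_eq_zero.1 hS with h0 | hemp
    · rcases h0 with ⟨a, ha, b, hb, hab, hab0⟩
      rw [pairDist_eq_hamming] at hab0
      exact hab (pread_injective (hammingDist_eq_zero.1 hab0))
    · exact absurd hemp (Set.nonempty_iff_ne_empty.1 ⟨pairDist x z, x, hx, z, hz, hxz, rfl⟩)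
  have hdle : ∀ a ∈ C, ∀ b ∈ C, a ≠ b → d ≤ pairDist a b := by
    intro a ha b hb hab
    rw [← hd, minPairDist]
    exact Nat.sInf_le ⟨a, ha, b, hb, hab, rfl⟩
  set r : ℝ := (((q : ℝ) ^ 2 - 1) / (q : ℝ) ^ 2 *
      (1 - Real.sqrt (1 - (q : ℝ) ^ 2 * ((d : ℝ) / n) / ((q : ℝ) ^ 2 - 1)))) * n with hrdef
  set T₀ := C.filter (fun c => (pairDist y c : ℝ) ≤ r) with hT0
  set T := T₀.image pread with hT
  have hTcard : T.card = T₀.card := Finset.card_image_of_injective _ pread_injective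
  have hTd : ∀ u ∈ T, ∀ v ∈ T, u ≠ v → d ≤ hammingDist u v := by
    intro u hu v hv huv
    rcases Finset.mem_image.1 hu with ⟨a, ha, rfl⟩
    rcases Finset.mem_image.1 hv with ⟨b, hb, rfl⟩
    have hab : a ≠ b := fun h => huv (by rw [h])
    rw [← pairDist_eq_hamming]
    exact hdle a (Finset.mem_of_mem_filter a ha) b (Finset.mem_of_mem_filter b hb) hab
  have hδ' : ((q ^ 2 : ℕ) : ℝ) * ((d : ℝ) / n) ≤ ((q ^ 2 : ℕ) : ℝ) - 1 := by
    rw [hcR]; exact hδ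
  have hTr : ∀ u ∈ T, (hammingDist (pread y) u : ℝ) ≤
      ((((q ^ 2 : ℕ) : ℝ) - 1) / ((q ^ 2 : ℕ) : ℝ) *
        (1 - Real.sqrt (1 - ((q ^ 2 : ℕ) : ℝ) * ((d : ℝ) / n) / (((q ^ 2 : ℕ) : ℝ) - 1)))) * n := by
    intro u hu
    rcases Finset.mem_image.1 hu with ⟨a, ha, rfl⟩
    rw [hcR, ← pairDist_eq_hamming]
    exact (Finset.mem_filter.1 ha).2
  have hmain := johnson_hamming hQcard hQ2 hn hd1 hδ' (pread y) T hTd hTr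
  rw [hTcard] at hmain
  have h1 : 2 * (n * (q ^ 2 - 1)) ≤ 2 * (q ^ 2 - 1) * n * d := by
    calc 2 * (n * (q ^ 2 - 1)) = 2 * (q ^ 2 - 1) * n * 1 := by ring
    _ ≤ 2 * (q ^ 2 - 1) * n * d := Nat.mul_le_mul_left _ hd1
  exact le_trans hmain h1
end

section
/- Let q be a prime power, γ a primitive element of F_q, and let k, n be integers with 1 ≤ k ≤ n − 2 and n ≤ q − 1. Then the Reed–Solomon code RS[n,k] is ((2/3)·(n−2−k), q)_P-list decodable; that is, for every y ∈ F_q^n, the number of codewords c ∈ RS[n,k] with d_P(y, c) ≤ (2/3)·(n−2−k) is at most q. -/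
open scoped Classical

namespace RSAux

variable {F : Type*} [Field F]

noncomputable def polyOf {m : ℕ} (a : Fin m → F) : Polynomial F :=
  ∑ i : Fin m, Polynomial.C (a i) * Polynomial.X ^ (i : ℕ)

lemma polyOf_coeff {m : ℕ} (a : Fin m → F) (j : ℕ) :
    (polyOf a).coeff j = if h : j < m then a ⟨j, h⟩ else 0 := by
  classical
  rw [polyOf, Polynomial.finset_sum_coeff]
  simp only [Polynomial.coeff_C_mul, Polynomial.coeff_X_pow, mul_ite, mul_one, mul_zero]
  split_ifs with h
  · rw [Finset.sum_eq_single (⟨j, h⟩ : Fin m)]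
    · simp
    · intro b _ hb
      rw [if_neg]
      intro hj
      exact hb (Fin.ext hj.symm)
    · intro habs; exact absurd (Finset.mem_univ _) habs
  · refine Finset.sum_eq_zero fun i _ => ?_
    rw [if_neg]
    intro hj
    exact h (hj ▸ i.isLt)

lemma polyOf_natDegree_lt {m : ℕ} (hm : 0 < m) (a : Fin m → F) :
    (polyOf a).natDegree < m := by
  rcases eq_or_ne (polyOf a) 0 with h0 | h0
  · simp [h0, hm]
  · by_contra hle
    push_neg at hle
    have hc := polyOf_coeff a (polyOf a).natDegree
    rw [dif_neg (by omega)] at hc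
    have hl := Polynomial.leadingCoeff_ne_zero.mpr h0
    rw [Polynomial.leadingCoeff] at hl
    exact hl hc

lemma polyOf_sub {m : ℕ} (a b : Fin m → F) : polyOf (a - b) = polyOf a - polyOf b := by
  rw [polyOf, polyOf, polyOf, ← Finset.sum_sub_distrib]
  exact Finset.sum_congr rfl fun i _ => by simp [sub_mul]

lemma polyOf_eq_zero {m : ℕ} {a : Fin m → F} (h : polyOf a = 0) : a = 0 := by
  funext i
  have hc := polyOf_coeff a i.1
  rw [h, Polynomial.coeff_zero, dif_pos i.isLt] at hc
  simpa using hc.symm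

lemma coeff_comp_C_mul_X (γ : F) (p : Polynomial F) (j : ℕ) :
    (p.comp (Polynomial.C γ * Polynomial.X)).coeff j = γ ^ j * p.coeff j := by
  induction p using Polynomial.induction_on' with
  | add p q hp hq => simp [hp, hq, mul_add]
  | monomial n a =>
    rw [Polynomial.monomial_comp, mul_pow, ← Polynomial.C_pow, Polynomial.coeff_C_mul,
      Polynomial.coeff_C_mul, Polynomial.coeff_X_pow, Polynomial.coeff_monomial]
    rcases eq_or_ne j n with rfl | h
    · simp [mul_comm]
    · simp [h, Ne.symm h]


lemma key_dim (γ : F) {Q k : ℕ} (hord : orderOf γ = Q) (hkQ : k < Q)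
    (A1 A2 : Polynomial F) (hA : A1 ≠ 0 ∨ A2 ≠ 0) :
    ∃ j0 : ℕ, ∀ g : Polynomial F, g.natDegree < k →
      A1 * g + A2 * g.comp (Polynomial.C γ * Polynomial.X) = 0 → g.coeff j0 = 0 → g = 0 := by
  classical
  have hex : ∃ i, ¬(A1.coeff i = 0 ∧ A2.coeff i = 0) := by
    rcases hA with h | h
    · refine ⟨A1.natDegree, fun hc => ?_⟩
      have hl := Polynomial.leadingCoeff_ne_zero.mpr h
      rw [Polynomial.leadingCoeff] at hl
      exact hl hc.1
    · refine ⟨A2.natDegree, fun hc => ?_⟩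
      have hl := Polynomial.leadingCoeff_ne_zero.mpr h
      rw [Polynomial.leadingCoeff] at hl
      exact hl hc.2
  set i0 := Nat.find hex with hi0
  have hstar := Nat.find_spec hex
  have hmin : ∀ i < i0, A1.coeff i = 0 ∧ A2.coeff i = 0 := fun i hi =>
    not_not.mp (Nat.find_min hex hi)
  set cj : ℕ → F := fun j => A1.coeff i0 + A2.coeff i0 * γ ^ j with hcj
  have huniq : ∀ j j', j < k → j' < k → cj j = 0 → cj j' = 0 → j = j' := by
    intro j j' hj hj' h1 h2
    have hA2 : A2.coeff i0 ≠ 0 := by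
      intro h0
      apply hstar
      refine ⟨?_, h0⟩
      rw [hcj] at h1
      simp only [h0, zero_mul, add_zero] at h1
      exact h1
    have h3 : γ ^ j = γ ^ j' := by
      apply mul_left_cancel₀ hA2
      linear_combination h1 - h2
    exact pow_injOn_Iio_orderOf (Set.mem_Iio.mpr (by omega)) (Set.mem_Iio.mpr (by omega)) h3
  suffices H : ∀ j0 : ℕ, (∀ j, j < k → j ≠ j0 → cj j ≠ 0) →
      ∀ g : Polynomial F, g.natDegree < k →
        A1 * g + A2 * g.comp (Polynomial.C γ * Polynomial.X) = 0 → g.coeff j0 = 0 → g = 0 by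
    by_cases hex2 : ∃ j, j < k ∧ cj j = 0
    · obtain ⟨jb, hjb, hcb⟩ := hex2
      exact ⟨jb, H jb fun j hj hne hc => hne (huniq j jb hj hjb hc hcb)⟩
    · push_neg at hex2
      exact ⟨0, H 0 fun j hj _ hc => hex2 j hj hc⟩
  intro j0 hgood g hdeg hid hj0
  ext n
  rw [Polynomial.coeff_zero]
  induction n using Nat.strong_induction_on with
  | _ n ih =>
    by_cases hnk : k ≤ n
    · exact Polynomial.coeff_eq_zero_of_natDegree_lt (lt_of_lt_of_le hdeg hnk)
    by_cases hnj : n = j0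
    · exact hnj ▸ hj0
    push_neg at hnk
    have hcn := hgood n hnk hnj
    have h0 : (A1 * g + A2 * g.comp (Polynomial.C γ * Polynomial.X)).coeff (i0 + n) = 0 := by
      rw [hid, Polynomial.coeff_zero]
    rw [Polynomial.coeff_add, Polynomial.coeff_mul, Polynomial.coeff_mul,
      ← Finset.sum_add_distrib] at h0
    rw [Finset.sum_eq_single_of_mem ((i0, n) : ℕ × ℕ)
      (Finset.HasAntidiagonal.mem_antidiagonal.mpr rfl) ?other] at h0
    · rw [coeff_comp_C_mul_X] at h0
      have hm : cj n * g.coeff n = 0 := by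
        rw [hcj]
        linear_combination h0
      exact (mul_eq_zero.mp hm).resolve_left hcn
    case other =>
      intro b hb hbne
      rw [Finset.HasAntidiagonal.mem_antidiagonal] at hb
      rcases lt_trichotomy b.2 n with hlt | heq | hgt
      · rw [coeff_comp_C_mul_X, ih b.2 hlt]
        ring
      · exact absurd (Prod.ext (by omega) heq) hbne
      · have hb1 : b.1 < i0 := by omega
        rw [(hmin b.1 hb1).1, (hmin b.1 hb1).2]
        ring


end RSAux

/-- Let `F` be the finite field of size `q`, `γ` a primitive element of `F`, and
`1 ≤ k ≤ n − 2`, `n ≤ q − 1`. The Reed–Solomon code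
`RS[n,k] = {(f(1), f(γ), …, f(γ^{n−1})) : deg f ≤ k−1}` is
`((2/3)(n−2−k), q)_P`-list decodable: for every `y ∈ F_q^n` the number of codewords
`c ∈ RS[n,k]` with `d_P(y, c) ≤ (2/3)(n−2−k)` is at most `q`. -/
theorem RS_pair_list_decodable {F : Type*} [Field F] [Fintype F] [DecidableEq F]
    {q n k : ℕ} (hq : Fintype.card F = q)
    (γ : F) (hγ : orderOf γ = q - 1)
    (hk : 1 ≤ k) (hkn : k ≤ n - 2) (hnq : n ≤ q - 1)
    (y : Fin n → F) :
    (Finset.univ.filter fun c : Fin n → F =>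
      (∃ f : Polynomial F, f.natDegree ≤ k - 1 ∧
        c = fun i : Fin n => f.eval (γ ^ (i : ℕ))) ∧
      (pairDist y c : ℝ) ≤ 2 / 3 * ((n : ℝ) - 2 - (k : ℝ))).card ≤ q := by
  classical
  have hq2 : 2 ≤ q := by rw [← hq]; exact Fintype.one_lt_card
  have hn3 : 3 ≤ n := by omega
  by_cases hL : (Finset.univ.filter fun c : Fin n → F =>
      (∃ f : Polynomial F, f.natDegree ≤ k - 1 ∧
        c = fun i : Fin n => f.eval (γ ^ (i : ℕ))) ∧
      (pairDist y c : ℝ) ≤ 2 / 3 * ((n : ℝ) - 2 - (k : ℝ))).Nonempty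
  swap
  · rw [Finset.not_nonempty_iff_eq_empty] at hL
    rw [hL]
    simp
  set D := (n - k + 1) / 3 with hD
  -- interpolation
  obtain ⟨v, w, hvw, hΦ⟩ := Fintype.exists_ne_map_eq_of_card_lt
    (fun v : (Fin (D + k) → F) × (Fin (D + 1) → F) × (Fin (D + 1) → F) =>
      fun i : Fin n =>
        (RSAux.polyOf v.1).eval (γ ^ (i : ℕ)) +
        (RSAux.polyOf v.2.1).eval (γ ^ (i : ℕ)) * y i +
        (RSAux.polyOf v.2.2).eval (γ ^ (i : ℕ)) * y ⟨(i.1 + 1) % n, Nat.mod_lt _ i.pos⟩)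
    (by
      simp only [Fintype.card_prod, Fintype.card_fun, Fintype.card_fin, hq]
      rw [← pow_add, ← pow_add]
      exact Nat.pow_lt_pow_right (by omega) (by omega))
  set A0 := RSAux.polyOf (v.1 - w.1) with hA0
  set A1 := RSAux.polyOf (v.2.1 - w.2.1) with hA1
  set A2 := RSAux.polyOf (v.2.2 - w.2.2) with hA2
  have hzero : ∀ i : Fin n,
      A0.eval (γ ^ (i : ℕ)) + A1.eval (γ ^ (i : ℕ)) * y i +
        A2.eval (γ ^ (i : ℕ)) * y ⟨(i.1 + 1) % n, Nat.mod_lt _ i.pos⟩ = 0 := by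
    intro i
    have h := congrFun hΦ i
    rw [hA0, hA1, hA2, RSAux.polyOf_sub, RSAux.polyOf_sub, RSAux.polyOf_sub,
      Polynomial.eval_sub, Polynomial.eval_sub, Polynomial.eval_sub]
    linear_combination h
  -- key claim: every close codeword's polynomial satisfies the functional equation
  have hRzero : ∀ c : Fin n → F, ∀ f : Polynomial F, f.natDegree ≤ k - 1 →
      (c = fun i : Fin n => f.eval (γ ^ (i : ℕ))) →
      ((pairDist y c : ℝ) ≤ 2 / 3 * ((n : ℝ) - 2 - (k : ℝ))) →
      A0 + A1 * f + A2 * f.comp (Polynomial.C γ * Polynomial.X) = 0 := by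
    intro c f hfd hfe hdist
    have hcast : ((n - 2 - k : ℕ) : ℝ) = (n : ℝ) - 2 - (k : ℝ) := by
      rw [Nat.cast_sub (by omega : k ≤ n - 2), Nat.cast_sub (by omega : 2 ≤ n)]
      norm_num
    have ht : 3 * pairDist y c ≤ 2 * (n - 2 - k) := by
      have h2 : ((3 * pairDist y c : ℕ) : ℝ) ≤ ((2 * (n - 2 - k) : ℕ) : ℝ) := by
        push_cast
        rw [hcast]
        linarith
      exact_mod_cast h2
    have hsplit := Finset.card_filter_add_card_filter_not
      (s := (Finset.univ : Finset (Fin n)))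
      (p := fun i : Fin n =>
        (y i, y ⟨(i.1 + 1) % n, Nat.mod_lt _ i.pos⟩) =
          (c i, c ⟨(i.1 + 1) % n, Nat.mod_lt _ i.pos⟩) ∧ i.1 + 1 < n)
    rw [Finset.card_univ, Fintype.card_fin] at hsplit
    set S := Finset.univ.filter (fun i : Fin n =>
      (y i, y ⟨(i.1 + 1) % n, Nat.mod_lt _ i.pos⟩) =
        (c i, c ⟨(i.1 + 1) % n, Nat.mod_lt _ i.pos⟩) ∧ i.1 + 1 < n) with hS
    have hsub : (Finset.univ.filter (fun i : Fin n =>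
        ¬((y i, y ⟨(i.1 + 1) % n, Nat.mod_lt _ i.pos⟩) =
          (c i, c ⟨(i.1 + 1) % n, Nat.mod_lt _ i.pos⟩) ∧ i.1 + 1 < n))) ⊆
        (Finset.univ.filter (fun i : Fin n =>
          (y i, y ⟨(i.1 + 1) % n, Nat.mod_lt _ i.pos⟩) ≠
          (c i, c ⟨(i.1 + 1) % n, Nat.mod_lt _ i.pos⟩))) ∪
        (Finset.univ.filter (fun i : Fin n => ¬(i.1 + 1 < n))) := by
      intro i hi
      rw [Finset.mem_filter] at hi
      rw [Finset.mem_union, Finset.mem_filter, Finset.mem_filter]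
      by_cases hA : (y i, y ⟨(i.1 + 1) % n, Nat.mod_lt _ i.pos⟩) =
          (c i, c ⟨(i.1 + 1) % n, Nat.mod_lt _ i.pos⟩)
      · exact Or.inr ⟨Finset.mem_univ _, fun hB => hi.2 ⟨hA, hB⟩⟩
      · exact Or.inl ⟨Finset.mem_univ _, hA⟩
    have hBcard : (Finset.univ.filter (fun i : Fin n => ¬(i.1 + 1 < n))).card ≤ 1 := by
      rw [Finset.card_le_one]
      intro a ha b hb
      rw [Finset.mem_filter] at ha hb
      have h1 := a.isLt
      have h2 := b.isLt
      apply Fin.ext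
      omega
    have hpd : (Finset.univ.filter (fun i : Fin n =>
        (y i, y ⟨(i.1 + 1) % n, Nat.mod_lt _ i.pos⟩) ≠
        (c i, c ⟨(i.1 + 1) % n, Nat.mod_lt _ i.pos⟩))).card = pairDist y c := rfl
    have hneg : (Finset.univ.filter (fun i : Fin n =>
        ¬((y i, y ⟨(i.1 + 1) % n, Nat.mod_lt _ i.pos⟩) =
          (c i, c ⟨(i.1 + 1) % n, Nat.mod_lt _ i.pos⟩) ∧ i.1 + 1 < n))).card ≤
        pairDist y c + 1 := by
      refine le_trans (Finset.card_le_card hsub) (le_trans (Finset.card_union_le _ _) ?_)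
      rw [hpd]
      omega
    have hScard : n - pairDist y c - 1 ≤ S.card := by omega
    set Z := S.image (fun i : Fin n => γ ^ (i.1 : ℕ)) with hZ
    have hZcard : Z.card = S.card := by
      rw [hZ]
      apply Finset.card_image_of_injOn
      intro i _ j _ hij
      apply Fin.ext
      refine pow_injOn_Iio_orderOf ?_ ?_ hij
      · rw [hγ]; exact Set.mem_Iio.mpr (by have := i.isLt; omega)
      · rw [hγ]; exact Set.mem_Iio.mpr (by have := j.isLt; omega)
    set R := A0 + A1 * f + A2 * f.comp (Polynomial.C γ * Polynomial.X) with hR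
    have hA0d : A0.natDegree < D + k := by
      rw [hA0]; exact RSAux.polyOf_natDegree_lt (by omega) _
    have hA1d : A1.natDegree < D + 1 := by
      rw [hA1]; exact RSAux.polyOf_natDegree_lt (by omega) _
    have hA2d : A2.natDegree < D + 1 := by
      rw [hA2]; exact RSAux.polyOf_natDegree_lt (by omega) _
    have hcompd : (f.comp (Polynomial.C γ * Polynomial.X)).natDegree ≤ k - 1 := by
      refine le_trans Polynomial.natDegree_comp_le ?_
      have h1 : (Polynomial.C γ * Polynomial.X).natDegree ≤ 1 :=
        le_trans Polynomial.natDegree_mul_le (by simp)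
      calc f.natDegree * (Polynomial.C γ * Polynomial.X).natDegree ≤ (k - 1) * 1 :=
            Nat.mul_le_mul hfd h1
        _ = k - 1 := mul_one _
    have hm1 : (A1 * f).natDegree ≤ D + (k - 1) :=
      le_trans Polynomial.natDegree_mul_le (add_le_add (by omega) hfd)
    have hm2 : (A2 * f.comp (Polynomial.C γ * Polynomial.X)).natDegree ≤ D + (k - 1) :=
      le_trans Polynomial.natDegree_mul_le (add_le_add (by omega) hcompd)
    have hRd : R.natDegree ≤ D + k - 1 := by
      rw [hR]
      refine le_trans (Polynomial.natDegree_add_le _ _)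
        (max_le (le_trans (Polynomial.natDegree_add_le _ _)
          (max_le (by omega) (by omega))) (by omega))
    have hRe : ∀ z ∈ Z, R.eval z = 0 := by
      intro z hz
      rw [hZ, Finset.mem_image] at hz
      obtain ⟨i, hiS, rfl⟩ := hz
      rw [hS, Finset.mem_filter] at hiS
      obtain ⟨-, hpair, hilt⟩ := hiS
      have hmod : (i.1 + 1) % n = i.1 + 1 := Nat.mod_eq_of_lt hilt
      have hci : c i = f.eval (γ ^ (i.1 : ℕ)) := by rw [hfe]
      have hcsi : c ⟨(i.1 + 1) % n, Nat.mod_lt _ i.pos⟩ = f.eval (γ ^ (i.1 + 1)) := by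
        rw [hfe]
        simp [hmod]
      rw [Prod.mk.injEq] at hpair
      have hyi : y i = f.eval (γ ^ (i.1 : ℕ)) := by rw [hpair.1, hci]
      have hysi : y ⟨(i.1 + 1) % n, Nat.mod_lt _ i.pos⟩ = f.eval (γ ^ (i.1 + 1)) := by
        rw [hpair.2, hcsi]
      rw [hR]
      simp only [Polynomial.eval_add, Polynomial.eval_mul, Polynomial.eval_comp,
        Polynomial.eval_C, Polynomial.eval_X]
      have h := hzero i
      rw [hyi, hysi, pow_succ] at h
      rw [mul_comm γ (γ ^ (i.1 : ℕ))]
      linear_combination h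
    have hfin : R = 0 := by
      refine Polynomial.eq_zero_of_natDegree_lt_card_of_eval_eq_zero' R Z hRe ?_
      rw [hZcard]
      omega
    rw [hR] at hfin
    exact hfin
  -- A1 or A2 nonzero
  obtain ⟨c0, hc0⟩ := hL
  rw [Finset.mem_filter] at hc0
  obtain ⟨-, ⟨f0, hf0d, hf0e⟩, hdist0⟩ := hc0
  have hR0 := hRzero c0 f0 hf0d hf0e hdist0
  have hA12 : A1 ≠ 0 ∨ A2 ≠ 0 := by
    by_contra h
    push_neg at h
    obtain ⟨h1, h2⟩ := h
    rw [h1, h2] at hR0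
    simp only [zero_mul, add_zero] at hR0
    apply hvw
    rw [hA1] at h1
    rw [hA2] at h2
    rw [hA0] at hR0
    have e0 : v.1 = w.1 := sub_eq_zero.mp (RSAux.polyOf_eq_zero hR0)
    have e1 : v.2.1 = w.2.1 := sub_eq_zero.mp (RSAux.polyOf_eq_zero h1)
    have e2 : v.2.2 = w.2.2 := sub_eq_zero.mp (RSAux.polyOf_eq_zero h2)
    exact Prod.ext e0 (Prod.ext e1 e2)
  obtain ⟨j0, hkey⟩ := RSAux.key_dim γ hγ (show k < q - 1 by omega) A1 A2 hA12
  -- the injection into F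
  set fc : (Fin n → F) → Polynomial F := fun c =>
    if hc : ∃ f : Polynomial F, f.natDegree ≤ k - 1 ∧
        c = fun i : Fin n => f.eval (γ ^ (i : ℕ))
    then hc.choose else 0 with hfc
  have hfc_spec : ∀ c : Fin n → F,
      (∃ f : Polynomial F, f.natDegree ≤ k - 1 ∧
        c = fun i : Fin n => f.eval (γ ^ (i : ℕ))) →
      (fc c).natDegree ≤ k - 1 ∧ c = fun i : Fin n => (fc c).eval (γ ^ (i : ℕ)) := by
    intro c hc
    simp only [hfc, dif_pos hc]
    exact ⟨hc.choose_spec.1, hc.choose_spec.2⟩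
  rw [← hq, ← Finset.card_univ]
  apply Finset.card_le_card_of_injOn (fun c => (fc c).coeff j0)
    (fun c _ => Finset.mem_univ _)
  intro c1 hc1 c2 hc2 hco
  rw [Finset.mem_coe, Finset.mem_filter] at hc1 hc2
  obtain ⟨-, hex1, hd1⟩ := hc1
  obtain ⟨-, hex2, hd2⟩ := hc2
  obtain ⟨hdeg1, heq1⟩ := hfc_spec c1 hex1
  obtain ⟨hdeg2, heq2⟩ := hfc_spec c2 hex2
  have hid1 := hRzero c1 (fc c1) hdeg1 heq1 hd1
  have hid2 := hRzero c2 (fc c2) hdeg2 heq2 hd2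
  have hgid : A1 * (fc c1 - fc c2) +
      A2 * ((fc c1 - fc c2).comp (Polynomial.C γ * Polynomial.X)) = 0 := by
    rw [Polynomial.sub_comp]
    linear_combination hid1 - hid2
  have hgdeg : (fc c1 - fc c2).natDegree < k :=
    lt_of_le_of_lt (le_trans (Polynomial.natDegree_sub_le _ _) (max_le hdeg1 hdeg2)) (by omega)
  have hgc : (fc c1 - fc c2).coeff j0 = 0 := by
    rw [Polynomial.coeff_sub]
    simp only at hco
    rw [hco, sub_self]
  have hg0 := hkey _ hgdeg hgid hgc
  have hfeq : fc c1 = fc c2 := sub_eq_zero.mp hg0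
  rw [heq1, heq2, hfeq]
end

section
/- (Reed–Solomon codes are list decodable beyond the Johnson-type bound) Let q be a prime power, γ a primitive element of F_q, and let k, n be integers with 1 + n/2 ≤ k ≤ n − 2 and n ≤ q − 1. Let δ = (n − k + 2)/n be the relative minimum pair distance of RS[n,k]. Then RS[n,k] is ((2/3)δn − 8/3, q)_P-list decodable; moreover, if additionally n > 8 / (3·((2/3)δ − 1 + √(1−δ))) (which is possible for any fixed δ ∈ (0, 3/4) since (2/3)δ > 1 − √(1−δ) there), then the list decoding radius (2/3)δn − 8/3 strictly exceeds the Johnson-type radius n·(1 − √(1−δ)). -/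
open scoped Classical

section Aux

open Polynomial

variable {F : Type*} [Field F]

noncomputable def polyOfAux {m : ℕ} (u : Fin m → F) : F[X] :=
  ∑ j : Fin m, Polynomial.monomial j.1 (u j)

lemma polyOfAux_coeff {m : ℕ} (u : Fin m → F) (t : ℕ) :
    (polyOfAux u).coeff t = if h : t < m then u ⟨t, h⟩ else 0 := by
  rw [polyOfAux, Polynomial.finset_sum_coeff]
  split_ifs with h
  · rw [Finset.sum_eq_single (⟨t, h⟩ : Fin m)]
    · simp [Polynomial.coeff_monomial]
    · intro b _ hb
      rw [Polynomial.coeff_monomial, if_neg]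
      intro he; exact hb (by ext; exact he)
    · simp
  · apply Finset.sum_eq_zero
    intro b _
    rw [Polynomial.coeff_monomial, if_neg]
    intro he; exact h (he ▸ b.2)

lemma polyOfAux_natDegree {m : ℕ} (u : Fin m → F) :
    (polyOfAux u).natDegree ≤ m - 1 := by
  rw [Polynomial.natDegree_le_iff_coeff_eq_zero]
  intro t ht
  rw [polyOfAux_coeff, dif_neg]
  omega

lemma polyOfAux_sub {m : ℕ} (u v : Fin m → F) :
    polyOfAux u - polyOfAux v = polyOfAux (u - v) := by
  rw [polyOfAux, polyOfAux, polyOfAux, ← Finset.sum_sub_distrib]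
  congr 1; ext j
  simp [Polynomial.monomial_sub]

lemma polyOfAux_eq_zero {m : ℕ} {u : Fin m → F} (h : polyOfAux u = 0) : u = 0 := by
  funext j
  have := congrArg (fun p => Polynomial.coeff p j.1) h
  simpa [polyOfAux_coeff, j.2] using this

lemma coeff_comp_C_mul_X (p : F[X]) (γ : F) (t : ℕ) :
    (p.comp (Polynomial.C γ * Polynomial.X)).coeff t = γ ^ t * p.coeff t := by
  induction p using Polynomial.induction_on' with
  | add p q hp hq => simp [hp, hq, mul_add]
  | monomial j a =>
    rw [Polynomial.monomial_comp, mul_pow, ← Polynomial.C_pow, ← mul_assoc, ← Polynomial.C_mul,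
      Polynomial.coeff_C_mul, Polynomial.coeff_X_pow, Polynomial.coeff_monomial]
    by_cases h : t = j
    · subst h; simp [mul_comm]
    · simp [h, Ne.symm h]

lemma natDegree_comp_C_mul_X (p : F[X]) {γ : F} (hγ : γ ≠ 0) :
    (p.comp (Polynomial.C γ * Polynomial.X)).natDegree = p.natDegree := by
  by_cases hp : p = 0
  · simp [hp]
  apply le_antisymm
  · rw [Polynomial.natDegree_le_iff_coeff_eq_zero]
    intro t ht
    rw [coeff_comp_C_mul_X, Polynomial.coeff_eq_zero_of_natDegree_lt ht, mul_zero]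
  · apply Polynomial.le_natDegree_of_ne_zero
    rw [coeff_comp_C_mul_X]
    exact mul_ne_zero (pow_ne_zero _ hγ) (Polynomial.leadingCoeff_ne_zero.mpr hp)

lemma comp_C_mul_X_ne_zero {p : F[X]} {γ : F} (hγ : γ ≠ 0) (hp : p ≠ 0) :
    p.comp (Polynomial.C γ * Polynomial.X) ≠ 0 := by
  intro h
  apply hp
  have := congrArg (fun q => Polynomial.coeff q p.natDegree) h
  simp only [coeff_comp_C_mul_X, Polynomial.coeff_zero] at this
  rcases mul_eq_zero.mp this with h2 | h2
  · exact absurd h2 (pow_ne_zero _ hγ)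
  · exact Polynomial.leadingCoeff_eq_zero.mp h2

lemma leadingCoeff_comp_C_mul_X (p : F[X]) {γ : F} (hγ : γ ≠ 0) :
    (p.comp (Polynomial.C γ * Polynomial.X)).leadingCoeff = γ ^ p.natDegree * p.leadingCoeff := by
  rw [Polynomial.leadingCoeff, natDegree_comp_C_mul_X p hγ, coeff_comp_C_mul_X]
  rfl

lemma pow_inj_of_lt_orderOf {γ : F} (hγ0 : γ ≠ 0) {i j : ℕ}
    (hi : i < orderOf γ) (hj : j < orderOf γ) (h : γ ^ i = γ ^ j) : i = j := by
  have key : ∀ i j : ℕ, i ≤ j → j < orderOf γ → γ ^ i = γ ^ j → i = j := by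
    intro i j hij hjlt he
    have h1 : γ ^ i * γ ^ (j - i) = γ ^ i * 1 := by
      rw [← pow_add, Nat.add_sub_cancel' hij, mul_one, he]
    have h2 : γ ^ (j - i) = 1 := mul_left_cancel₀ (pow_ne_zero _ hγ0) h1
    have h3 := orderOf_dvd_of_pow_eq_one h2
    rcases Nat.eq_zero_of_dvd_of_lt h3 (by omega) with h4
    omega
  rcases le_total i j with hij | hij
  · exact key i j hij hj h
  · exact (key j i hij hi h.symm).symm

/-- Key degree-uniqueness lemma: nonzero solutions of `B h + C (h ∘ γX) = 0`
with degrees below `orderOf γ` all have the same degree. -/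
lemma solution_deg_unique {B C : F[X]} {γ : F} (hγ0 : γ ≠ 0)
    (hC : C ≠ 0) {h₁ h₂ : F[X]} (h₁0 : h₁ ≠ 0) (h₂0 : h₂ ≠ 0)
    (e₁ : B * h₁ + C * (h₁.comp (Polynomial.C γ * Polynomial.X)) = 0)
    (e₂ : B * h₂ + C * (h₂.comp (Polynomial.C γ * Polynomial.X)) = 0)
    (hd₁ : h₁.natDegree < orderOf γ) (hd₂ : h₂.natDegree < orderOf γ) :
    h₁.natDegree = h₂.natDegree := by
  set T₁ := h₁.comp (Polynomial.C γ * Polynomial.X) with hT₁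
  set T₂ := h₂.comp (Polynomial.C γ * Polynomial.X) with hT₂
  have key : C * (T₁ * h₂ - T₂ * h₁) = 0 := by
    have := congrArg (· * h₂) e₁
    have h2 := congrArg (· * h₁) e₂
    simp only [add_mul, zero_mul] at this h2
    ring_nf
    ring_nf at this h2
    linear_combination this - h2
  have hW : T₁ * h₂ = T₂ * h₁ := by
    rcases mul_eq_zero.mp key with h | h
    · exact absurd h hC
    · exact sub_eq_zero.mp h
  have hT₁0 : T₁ ≠ 0 := comp_C_mul_X_ne_zero hγ0 h₁0
  have hT₂0 : T₂ ≠ 0 := comp_C_mul_X_ne_zero hγ0 h₂0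
  have hlc := congrArg Polynomial.leadingCoeff hW
  rw [Polynomial.leadingCoeff_mul, Polynomial.leadingCoeff_mul, hT₁,
    leadingCoeff_comp_C_mul_X _ hγ0, hT₂, leadingCoeff_comp_C_mul_X _ hγ0] at hlc
  have hl₁ : h₁.leadingCoeff ≠ 0 := Polynomial.leadingCoeff_ne_zero.mpr h₁0
  have hl₂ : h₂.leadingCoeff ≠ 0 := Polynomial.leadingCoeff_ne_zero.mpr h₂0
  have hpow : γ ^ h₁.natDegree = γ ^ h₂.natDegree := by
    have h' : γ ^ h₁.natDegree * (h₁.leadingCoeff * h₂.leadingCoeff)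
        = γ ^ h₂.natDegree * (h₁.leadingCoeff * h₂.leadingCoeff) := by
      linear_combination hlc
    exact mul_right_cancel₀ (mul_ne_zero hl₁ hl₂) h'
  exact pow_inj_of_lt_orderOf hγ0 hd₁ hd₂ hpow

end Aux

set_option maxHeartbeats 2000000 in
/-- (Reed–Solomon codes are list decodable beyond the Johnson-type bound) Let `F` be
the finite field of size `q`, `γ` a primitive element of `F`, and `k, n` integers with
`1 + n/2 ≤ k ≤ n − 2` and `n ≤ q − 1`. Let `δ = (n − k + 2)/n` be the relative minimum
pair distance of `RS[n,k]`. Then `RS[n,k]` is `((2/3)δn − 8/3, q)_P`-list decodable;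
moreover, if additionally `n > 8 / (3·((2/3)δ − 1 + √(1−δ)))`, then the list decoding
radius `(2/3)δn − 8/3` strictly exceeds the Johnson-type radius `n·(1 − √(1−δ))`. -/
theorem RS_beyond_johnson {F : Type*} [Field F] [Fintype F] [DecidableEq F]
    {q n k : ℕ} (hq : Fintype.card F = q)
    (γ : F) (hγ : orderOf γ = q - 1)
    (hk : 1 + (n : ℝ) / 2 ≤ (k : ℝ)) (hkn : k ≤ n - 2) (hnq : n ≤ q - 1) :
    let δ : ℝ := ((n : ℝ) - (k : ℝ) + 2) / (n : ℝ)
    (∀ y : Fin n → F,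
      (Finset.univ.filter fun c : Fin n → F =>
        (∃ f : Polynomial F, f.natDegree ≤ k - 1 ∧
          c = fun i : Fin n => f.eval (γ ^ (i : ℕ))) ∧
        (pairDist y c : ℝ) ≤ 2 / 3 * δ * (n : ℝ) - 8 / 3).card ≤ q) ∧
    ((n : ℝ) > 8 / (3 * (2 / 3 * δ - 1 + Real.sqrt (1 - δ))) →
      2 / 3 * δ * (n : ℝ) - 8 / 3 > (n : ℝ) * (1 - Real.sqrt (1 - δ))) := by
  intro δ
  have hδdef : δ = ((n : ℝ) - (k : ℝ) + 2) / (n : ℝ) := rfl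
  clear_value δ
  have hq2 : 2 ≤ q := hq ▸ Fintype.one_lt_card
  have hk1 : 1 ≤ k := by
    by_contra h
    have hk0 : k = 0 := by omega
    rw [hk0] at hk
    push_cast at hk
    have : (0:ℝ) ≤ (n:ℝ) := Nat.cast_nonneg n
    linarith
  have hn3 : 3 ≤ n := by omega
  have hkn' : k + 2 ≤ n := by omega
  have hknR : (k : ℝ) + 2 ≤ (n : ℝ) := by exact_mod_cast hkn'
  have hn6 : 6 ≤ n := by
    have : (6:ℝ) ≤ (n:ℝ) := by linarith
    exact_mod_cast this
  have hqn : n + 1 ≤ q := by omega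
  have hγ0 : γ ≠ 0 := by
    intro h0
    have h1 := pow_orderOf_eq_one γ
    rw [hγ, h0] at h1
    rw [zero_pow (by omega : q - 1 ≠ 0)] at h1
    exact zero_ne_one h1
  have hnR : (0:ℝ) < (n:ℝ) := by positivity
  have hδeq : 2 / 3 * δ * (n : ℝ) - 8 / 3 = (2 * ((n:ℝ) - k) - 4) / 3 := by
    rw [hδdef]
    field_simp
    ring
  constructor
  · -- main list-decodability part
    intro y
    set S := (Finset.univ.filter fun c : Fin n → F =>
        (∃ f : Polynomial F, f.natDegree ≤ k - 1 ∧
          c = fun i : Fin n => f.eval (γ ^ (i : ℕ))) ∧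
        (pairDist y c : ℝ) ≤ 2 / 3 * δ * (n : ℝ) - 8 / 3) with hS
    set a := n - k with ha
    have han : n = a + k := by omega
    have ha2 : 2 ≤ a := by omega
    set D := (a + 1) / 3 with hD
    have hD3 : 3 * D ≤ a + 1 ∧ a - 1 ≤ 3 * D := by omega
    set M := D + k with hM
    have hpdnat : ∀ c : Fin n → F,
        (pairDist y c : ℝ) ≤ 2 / 3 * δ * (n : ℝ) - 8 / 3 → 3 * pairDist y c + 4 ≤ 2 * a := by
      intro c hc
      rw [hδeq] at hc
      have hnk : ((a : ℕ) : ℝ) = (n:ℝ) - (k:ℝ) := by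
        rw [ha]; push_cast [Nat.cast_sub (by omega : k ≤ n)]; ring
      have : (3 * pairDist y c + 4 : ℝ) ≤ 2 * (a:ℝ) := by
        rw [hnk]; linarith
      exact_mod_cast this
    -- interpolation
    obtain ⟨t₁, t₂, htne, hteq⟩ := Fintype.exists_ne_map_eq_of_card_lt
      (fun (t : (Fin M → F) × (Fin (D+1) → F) × (Fin (D+1) → F)) (i : Fin n) =>
        (polyOfAux t.1).eval (γ ^ i.1) + (polyOfAux t.2.1).eval (γ ^ i.1) * y i
          + (polyOfAux t.2.2).eval (γ ^ i.1) * y ⟨(i.1 + 1) % n, Nat.mod_lt _ i.pos⟩)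
      (by
        simp only [Fintype.card_prod, Fintype.card_fun, Fintype.card_fin, hq]
        calc q ^ n < q ^ (M + ((D+1) + (D+1))) :=
              Nat.pow_lt_pow_right (by omega) (by omega)
          _ = q ^ M * (q ^ (D+1) * q ^ (D+1)) := by rw [pow_add, pow_add, pow_add])
    set A := polyOfAux (t₁.1 - t₂.1) with hA
    set B := polyOfAux (t₁.2.1 - t₂.2.1) with hB
    set Cp := polyOfAux (t₁.2.2 - t₂.2.2) with hCp
    have hABC : ¬(A = 0 ∧ B = 0 ∧ Cp = 0) := by
      rintro ⟨h1, h2, h3⟩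
      apply htne
      have e1 := polyOfAux_eq_zero (hA ▸ h1)
      have e2 := polyOfAux_eq_zero (hB ▸ h2)
      have e3 := polyOfAux_eq_zero (hCp ▸ h3)
      ext1
      · rwa [sub_eq_zero] at e1
      · ext1
        · rwa [sub_eq_zero] at e2
        · rwa [sub_eq_zero] at e3
    have hvan : ∀ i : Fin n,
        A.eval (γ ^ i.1) + B.eval (γ ^ i.1) * y i
          + Cp.eval (γ ^ i.1) * y ⟨(i.1 + 1) % n, Nat.mod_lt _ i.pos⟩ = 0 := by
      intro i
      have h := congrFun hteq i
      rw [hA, hB, hCp, ← polyOfAux_sub, ← polyOfAux_sub, ← polyOfAux_sub]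
      simp only [Polynomial.eval_sub]
      linear_combination h
    have hdA : A.natDegree ≤ D + k - 1 := by
      have h := polyOfAux_natDegree (t₁.1 - t₂.1)
      rw [← hA] at h
      omega
    have hdB : B.natDegree ≤ D := by
      have h := polyOfAux_natDegree (t₁.2.1 - t₂.2.1)
      rw [← hB] at h
      omega
    have hdC : Cp.natDegree ≤ D := by
      have h := polyOfAux_natDegree (t₁.2.2 - t₂.2.2)
      rw [← hCp] at h
      omega
    -- the functional identity for every codeword in the list
    have hident : ∀ f : Polynomial F, f.natDegree ≤ k - 1 →
        (pairDist y (fun i : Fin n => f.eval (γ ^ (i : ℕ))) : ℝ) ≤ 2 / 3 * δ * (n : ℝ) - 8 / 3 →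
        A + B * f + Cp * (f.comp (Polynomial.C γ * Polynomial.X)) = 0 := by
      intro f hdf hpd
      set c : Fin n → F := fun i : Fin n => f.eval (γ ^ (i : ℕ)) with hc
      set R := A + B * f + Cp * (f.comp (Polynomial.C γ * Polynomial.X)) with hR
      have hdR : R.natDegree ≤ D + k - 1 := by
        rw [hR]
        refine le_trans (Polynomial.natDegree_add_le _ _) (max_le
          (le_trans (Polynomial.natDegree_add_le _ _) (max_le hdA ?_)) ?_)
        · refine le_trans Polynomial.natDegree_mul_le ?_
          omega
        · refine le_trans Polynomial.natDegree_mul_le ?_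
          rw [natDegree_comp_C_mul_X f hγ0]
          omega
      have hpd' : 3 * pairDist y c + 4 ≤ 2 * a := hpdnat c hpd
      set G : Finset (Fin n) := Finset.univ.filter (fun i : Fin n =>
        (y i, y ⟨(i.1 + 1) % n, Nat.mod_lt _ i.pos⟩)
          = (c i, c ⟨(i.1 + 1) % n, Nat.mod_lt _ i.pos⟩) ∧ i.1 + 1 < n) with hG
      have hGcard : D + k ≤ G.card := by
        have hsplit := Finset.card_filter_add_card_filter_not
          (s := (Finset.univ : Finset (Fin n))) (p := fun i : Fin n =>
            (y i, y ⟨(i.1 + 1) % n, Nat.mod_lt _ i.pos⟩) ≠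
            (c i, c ⟨(i.1 + 1) % n, Nat.mod_lt _ i.pos⟩))
        have hpdc : (Finset.univ.filter (fun i : Fin n =>
            (y i, y ⟨(i.1 + 1) % n, Nat.mod_lt _ i.pos⟩) ≠
            (c i, c ⟨(i.1 + 1) % n, Nat.mod_lt _ i.pos⟩))).card = pairDist y c := rfl
        have hsub : (Finset.univ.filter (fun i : Fin n =>
            ¬((y i, y ⟨(i.1 + 1) % n, Nat.mod_lt _ i.pos⟩) ≠
            (c i, c ⟨(i.1 + 1) % n, Nat.mod_lt _ i.pos⟩))))
            ⊆ G ∪ {(⟨n - 1, by omega⟩ : Fin n)} := by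
          intro i hi
          rw [Finset.mem_filter] at hi
          rcases Nat.lt_or_ge (i.1 + 1) n with hlt | hge
          · apply Finset.mem_union_left
            rw [hG, Finset.mem_filter]
            exact ⟨Finset.mem_univ _, not_not.mp hi.2, hlt⟩
          · apply Finset.mem_union_right
            have h2 := i.2
            exact Finset.mem_singleton.mpr (Fin.ext (show i.1 = n - 1 by omega))
        have hle := Finset.card_le_card hsub
        have hle2 := Finset.card_union_le G {(⟨n - 1, by omega⟩ : Fin n)}
        rw [Finset.card_singleton] at hle2
        rw [Finset.card_univ, Fintype.card_fin, hpdc] at hsplit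
        omega
      have hroots : ∀ x ∈ G.image (fun i : Fin n => γ ^ i.1), R.eval x = 0 := by
        intro x hx
        rw [Finset.mem_image] at hx
        obtain ⟨i, hiG, rfl⟩ := hx
        rw [hG, Finset.mem_filter] at hiG
        obtain ⟨-, hag, hlt⟩ := hiG
        rw [hc] at hag
        simp only [Prod.mk.injEq] at hag
        obtain ⟨h1, h2⟩ := hag
        have hmod : (i.1 + 1) % n = i.1 + 1 := Nat.mod_eq_of_lt hlt
        have h2' : y ⟨(i.1 + 1) % n, Nat.mod_lt _ i.pos⟩ = f.eval (γ ^ (i.1 + 1)) := by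
          rw [h2]
          show f.eval (γ ^ ((i.1 + 1) % n)) = _
          rw [hmod]
        have hv := hvan i
        rw [hR]
        simp only [Polynomial.eval_add, Polynomial.eval_mul, Polynomial.eval_comp,
          Polynomial.eval_C, Polynomial.eval_X]
        have hpow : γ * γ ^ i.1 = γ ^ (i.1 + 1) := by rw [pow_succ]; ring
        rw [hpow, ← h2', ← h1]
        exact hv
      have hR0 : R = 0 := by
        apply Polynomial.eq_zero_of_natDegree_lt_card_of_eval_eq_zero' R
          (G.image fun i : Fin n => γ ^ i.1) hroots
        have hinj : Set.InjOn (fun i : Fin n => γ ^ i.1) G := by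
          intro i _ j _ hij
          have hi := i.2
          have hj := j.2
          exact Fin.ext (pow_inj_of_lt_orderOf hγ0 (by rw [hγ]; omega) (by rw [hγ]; omega) hij)
        rw [Finset.card_image_of_injOn hinj]
        omega
      exact hR0
    -- pick a polynomial for each codeword
    set pick : (Fin n → F) → Polynomial F := fun c =>
      if h : ∃ f : Polynomial F, f.natDegree ≤ k - 1 ∧
          c = fun i : Fin n => f.eval (γ ^ (i : ℕ)) then h.choose else 0 with hpickdef
    have hpickP : ∀ c ∈ S, (pick c).natDegree ≤ k - 1 ∧
        c = fun i : Fin n => (pick c).eval (γ ^ (i : ℕ)) := by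
      intro c hc
      rw [hS, Finset.mem_filter] at hc
      obtain ⟨-, hex', -⟩ := hc
      rw [hpickdef]
      simp only [dif_pos hex']
      exact hex'.choose_spec
    have hpd_mem : ∀ c ∈ S, (pairDist y c : ℝ) ≤ 2 / 3 * δ * (n : ℝ) - 8 / 3 := by
      intro c hc
      rw [hS, Finset.mem_filter] at hc
      exact hc.2.2
    have hpid : ∀ c ∈ S,
        A + B * pick c + Cp * ((pick c).comp (Polynomial.C γ * Polynomial.X)) = 0 := by
      intro c hc
      obtain ⟨hdeg, hcf⟩ := hpickP c hc
      apply hident _ hdeg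
      rw [← hcf]
      exact hpd_mem c hc
    have hsol : ∀ c ∈ S, ∀ c' ∈ S,
        B * (pick c - pick c') + Cp * ((pick c - pick c').comp
          (Polynomial.C γ * Polynomial.X)) = 0 := by
      intro c hc c' hc'
      have e1 := hpid c hc
      have e2 := hpid c' hc'
      rw [Polynomial.sub_comp]
      linear_combination e1 - e2
    by_cases hex : ∃ c₁ ∈ S, ∃ c₂ ∈ S, c₁ ≠ c₂
    · obtain ⟨c₁, hc₁, c₂, hc₂, hne⟩ := hex
      set h₀ := pick c₁ - pick c₂ with hh₀
      have h₀ne : h₀ ≠ 0 := by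
        intro h
        apply hne
        have hpe : pick c₁ = pick c₂ := by
          rw [hh₀] at h
          exact sub_eq_zero.mp h
        rw [(hpickP c₁ hc₁).2, (hpickP c₂ hc₂).2, hpe]
      have hCne : Cp ≠ 0 := by
        intro hC0
        have hs := hsol c₁ hc₁ c₂ hc₂
        rw [← hh₀, hC0, zero_mul, add_zero] at hs
        rcases mul_eq_zero.mp hs with hB0 | h0
        · have e1 := hpid c₁ hc₁
          rw [hB0, hC0, zero_mul, zero_mul, add_zero, add_zero] at e1
          exact hABC ⟨e1, hB0, hC0⟩
        · exact h₀ne h0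
      have hdegk : ∀ u ∈ S, ∀ v ∈ S, (pick u - pick v).natDegree ≤ k - 1 := by
        intro u hu v hv
        exact le_trans (Polynomial.natDegree_sub_le _ _)
          (max_le (hpickP u hu).1 (hpickP v hv).1)
      have hordk : k - 1 < orderOf γ := by rw [hγ]; omega
      have hkey : S.card ≤ (Finset.univ : Finset F).card := by
        apply Finset.card_le_card_of_injOn (fun c => (pick c - pick c₁).coeff h₀.natDegree)
          (fun _ _ => Finset.mem_univ _)
        intro u hu v hv heq
        rw [Finset.mem_coe] at hu hv
        simp only at heq
        set h' := pick u - pick v with hh'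
        have hco : h'.coeff h₀.natDegree = 0 := by
          have : h'.coeff h₀.natDegree
              = (pick u - pick c₁).coeff h₀.natDegree
                - (pick v - pick c₁).coeff h₀.natDegree := by
            rw [hh']
            simp only [Polynomial.coeff_sub]
            ring
          rw [this, heq, sub_self]
        have h'0 : h' = 0 := by
          by_contra h'ne
          have hdeq : h'.natDegree = h₀.natDegree :=
            solution_deg_unique hγ0 hCne h'ne h₀ne (hsol u hu v hv)
              (by rw [hh₀]; exact hsol c₁ hc₁ c₂ hc₂)
              (lt_of_le_of_lt (hdegk u hu v hv) hordk)
              (lt_of_le_of_lt (hdegk c₁ hc₁ c₂ hc₂) hordk)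
          apply Polynomial.leadingCoeff_ne_zero.mpr h'ne
          rw [Polynomial.leadingCoeff, hdeq]
          exact hco
        have hpe : pick u = pick v := by
          rw [hh'] at h'0
          exact sub_eq_zero.mp h'0
        rw [(hpickP u hu).2, (hpickP v hv).2, hpe]
      rw [Finset.card_univ, hq] at hkey
      exact hkey
    · push_neg at hex
      have : S.card ≤ 1 := Finset.card_le_one.mpr (fun u hu v hv => hex u hu v hv)
      omega
  · -- Johnson comparison part
    intro hbig
    set s := Real.sqrt (1 - δ) with hs
    have hδpos : 0 < δ := by
      rw [hδdef]
      apply div_pos <;> linarith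
    have hδle : δ ≤ 2/3 := by
      rw [hδdef, div_le_iff₀ hnR]
      have h6 : (6:ℝ) ≤ (n:ℝ) := by exact_mod_cast hn6
      linarith
    have hs0 : 0 ≤ s := Real.sqrt_nonneg _
    have hkey : 1 - 2/3 * δ < s := by
      rw [hs, Real.lt_sqrt (by linarith)]
      nlinarith [mul_pos hδpos (show (0:ℝ) < 3 - 4*δ by linarith)]
    have hE : 0 < 2 / 3 * δ - 1 + s := by linarith
    have h8 : 8 < (n:ℝ) * (3 * (2 / 3 * δ - 1 + s)) := by
      rw [← div_lt_iff₀ (by linarith)]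
      exact hbig
    nlinarith [h8]
end
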